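/- arXiv:2206.15092 — 3 statements merged into one kernel-verified Lean document; each statement's English description precedes it below -/
import Mathlib

section
/- The tree-independence number of any block-cactus graph is at most 2. -/
open SimpleGraph

/-! ## Common definitions -/

variable {V : Type} {W : Type}

/-- `G.HasInducedMinor H` : `H` is an induced minor of `G`, witnessed by an induced minor
model: pairwise disjoint nonempty connected branch sets `X w ⊆ V(G)` such that for distinct
`w₁ w₂` there is an edge of `G` between `X w₁` and `X w₂` iff `w₁w₂ ∈ E(H)`. -/
def SimpleGraph.HasInducedMinor (G : SimpleGraph V) (H : SimpleGraph W) : Prop :=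
  ∃ X : W → Set V,
    (∀ w, (G.induce (X w)).Connected) ∧
    (Pairwise fun w₁ w₂ => Disjoint (X w₁) (X w₂)) ∧
    ∀ w₁ w₂, w₁ ≠ w₂ →
      (H.Adj w₁ w₂ ↔ ∃ v₁ ∈ X w₁, ∃ v₂ ∈ X w₂, G.Adj v₁ v₂)

/-- `G.HasMinor H` : `H` is a minor of `G`, witnessed by a minor model. -/
def SimpleGraph.HasMinor (G : SimpleGraph V) (H : SimpleGraph W) : Prop :=
  ∃ X : W → Set V,
    (∀ w, (G.induce (X w)).Connected) ∧
    (Pairwise fun w₁ w₂ => Disjoint (X w₁) (X w₂)) ∧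
    ∀ w₁ w₂, H.Adj w₁ w₂ → ∃ v₁ ∈ X w₁, ∃ v₂ ∈ X w₂, G.Adj v₁ v₂

/-- `S` is a `u,v`-separator in `G` : `u, v ∉ S` and every walk from `u` to `v` in `G`
meets `S` (i.e. `u` and `v` lie in different components of `G - S`). -/
def SimpleGraph.IsSeparator (G : SimpleGraph V) (u v : V) (S : Set V) : Prop :=
  u ∉ S ∧ v ∉ S ∧ ∀ p : G.Walk u v, ∃ x ∈ p.support, x ∈ S

/-- A minimal separator of `G`: an inclusion-minimal `u,v`-separator for some
non-adjacent pair of distinct vertices `u, v`. -/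
def SimpleGraph.IsMinimalSeparator (G : SimpleGraph V) (S : Set V) : Prop :=
  ∃ u v : V, u ≠ v ∧ ¬ G.Adj u v ∧ G.IsSeparator u v S ∧
    ∀ S' ⊂ S, ¬ G.IsSeparator u v S'

/-- The independence number of the subgraph of `G` induced by the set `A`:
the largest size of a finite set of pairwise non-adjacent vertices inside `A`. -/
noncomputable def SimpleGraph.indepNumOn (G : SimpleGraph V) (A : Set V) : ℕ :=
  sSup {n | ∃ s : Finset V, ↑s ⊆ A ∧ (∀ u ∈ s, ∀ v ∈ s, u ≠ v → ¬ G.Adj u v) ∧ s.card = n}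

/-- A tree decomposition of a graph `G`. -/
structure SimpleGraph.TreeDecomp (G : SimpleGraph V) where
  ι : Type
  tree : SimpleGraph ι
  isTree : tree.IsTree
  bag : ι → Set V
  bags_cover_vertices : ∀ v : V, ∃ t, v ∈ bag t
  bags_cover_edges : ∀ ⦃u v : V⦄, G.Adj u v → ∃ t, u ∈ bag t ∧ v ∈ bag t
  bags_connected : ∀ v : V, (tree.induce {t | v ∈ bag t}).Connected

/-- The independence number of a tree decomposition: the maximum, over all bags,
of the independence number of the subgraph induced by the bag. -/
noncomputable def SimpleGraph.TreeDecomp.indepNum {G : SimpleGraph V} (D : G.TreeDecomp) : ℕ∞ :=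
  ⨆ t : D.ι, (G.indepNumOn (D.bag t) : ℕ∞)

/-- The tree-independence number of `G`: the minimum independence number of
a tree decomposition of `G`. -/
noncomputable def SimpleGraph.treeIndepNum (G : SimpleGraph V) : ℕ∞ :=
  ⨅ D : G.TreeDecomp, D.indepNum

/-- The width of a tree decomposition: the maximum of `|X_t| - 1` over all bags. -/
noncomputable def SimpleGraph.TreeDecomp.width {G : SimpleGraph V} (D : G.TreeDecomp) : ℕ∞ :=
  ⨆ t : D.ι, (((D.bag t).ncard - 1 : ℕ) : ℕ∞)

/-- The treewidth of `G`. -/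
noncomputable def SimpleGraph.treewidth (G : SimpleGraph V) : ℕ∞ :=
  ⨅ D : G.TreeDecomp, D.width

/-- A graph is chordal if it has no induced cycle of length at least `4`. -/
def SimpleGraph.IsChordal (G : SimpleGraph V) : Prop :=
  ∀ n : ℕ, 4 ≤ n → ∀ A : Set V, ¬ Nonempty (cycleGraph n ≃g G.induce A)

/-- `H` is a minimal triangulation of `G`: a chordal supergraph of `G` on the same
vertex set such that no chordal graph lies strictly between `G` and `H`. -/
def SimpleGraph.IsMinimalTriangulation (G H : SimpleGraph V) : Prop :=
  G ≤ H ∧ H.IsChordal ∧ ∀ H' : SimpleGraph V, G ≤ H' → H'.IsChordal → ¬ H' < H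

/-- `X` is a potential maximal clique of `G`: a maximal clique in some
minimal triangulation of `G`. -/
def SimpleGraph.IsPotentialMaxClique (G : SimpleGraph V) (X : Set V) : Prop :=
  ∃ H : SimpleGraph V, G.IsMinimalTriangulation H ∧
    H.IsClique X ∧ ∀ Y : Set V, H.IsClique Y → X ⊆ Y → Y = X

/-- The pmc-independence number of `G`: the maximum independence number of a subgraph
of `G` induced by a potential maximal clique of `G`. -/
noncomputable def SimpleGraph.pmcIndepNum (G : SimpleGraph V) : ℕ :=
  sSup {n | ∃ X : Set V, G.IsPotentialMaxClique X ∧ n = G.indepNumOn X}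

/-- The maximum size of a minimal separator of `G` (`0` if `G` has no minimal separator). -/
noncomputable def SimpleGraph.maxMinimalSeparatorSize (G : SimpleGraph V) : ℕ :=
  sSup {n | ∃ S : Set V, G.IsMinimalSeparator S ∧ n = S.ncard}

/-- `G` is `k`-connected: `G` has at least `k+1` vertices and removing any set of fewer
than `k` vertices leaves a connected graph. -/
def SimpleGraph.IsKConnected (G : SimpleGraph V) [Fintype V] (k : ℕ) : Prop :=
  k + 1 ≤ Fintype.card V ∧
    ∀ X : Finset V, X.card < k → (G.induce ((↑X : Set V)ᶜ)).Connected

/-- The `n`-wheel `W_n`: the cycle `C_n` together with a universal vertex. -/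
def wheelGraph (n : ℕ) : SimpleGraph (Option (Fin n)) :=
  SimpleGraph.fromRel (fun a b =>
    a = none ∨ ∃ i j : Fin n, a = some i ∧ b = some j ∧ (cycleGraph n).Adj i j)

/-- `K₅⁻`: the complete graph on `5` vertices minus an edge. -/
def K5minus : SimpleGraph (Fin 5) := (completeGraph (Fin 5)).deleteEdges {s(0, 1)}

/-- The complete bipartite graph `K_{2,q}`. -/
abbrev K2q (q : ℕ) : SimpleGraph (Fin 2 ⊕ Fin q) := completeBipartiteGraph (Fin 2) (Fin q)

/-- The Hadwiger number of `G`: the largest `p` such that `K_p` is a minor of `G`. -/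
noncomputable def SimpleGraph.hadwigerNumber (G : SimpleGraph V) : ℕ :=
  sSup {p | G.HasMinor (completeGraph (Fin p))}

/-- A graph has no cut-vertex: deleting any single vertex leaves a preconnected graph. -/
def SimpleGraph.HasNoCutVertex {α : Type} (H : SimpleGraph α) : Prop :=
  ∀ v : α, (H.induce {u | u ≠ v}).Preconnected

/-- A block of `G`: a maximal connected subgraph of `G` without a cut-vertex. -/
def SimpleGraph.IsBlock {V : Type} (G : SimpleGraph V) (B : G.Subgraph) : Prop :=
  B.coe.Connected ∧ B.coe.HasNoCutVertex ∧
    ∀ B' : G.Subgraph, B ≤ B' → B'.coe.Connected → B'.coe.HasNoCutVertex → B' = B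
namespace BlockCactusProof
open SimpleGraph

/-! ### Infrastructure -/

/-- All bags have independence number at most 2 (combinatorial form). -/
def Good {V : Type} {G : SimpleGraph V} (D : G.TreeDecomp) : Prop :=
  ∀ t : D.ι, ∀ s : Finset V, ↑s ⊆ D.bag t →
    (∀ u ∈ s, ∀ v ∈ s, u ≠ v → ¬ G.Adj u v) → s.card ≤ 2

lemma treeIndepNum_le_two' {V : Type} {G : SimpleGraph V} (D : G.TreeDecomp) (hD : Good D) :
    G.treeIndepNum ≤ 2 := by
  refine le_trans (iInf_le _ D) (iSup_le fun t => ?_)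
  have h : G.indepNumOn (D.bag t) ≤ 2 := by
    unfold SimpleGraph.indepNumOn
    apply csSup_le
    · exact ⟨0, ∅, by simp, by simp, rfl⟩
    · rintro n ⟨s, hs, hind, rfl⟩
      exact hD t s hs hind
  exact_mod_cast h

/-- Isomorphism between induced subgraphs from a graph isomorphism. -/
def isoInduce {α β : Type} {G : SimpleGraph α} {H : SimpleGraph β} (e : G ≃g H)
    (S : Set α) (T : Set β) (hST : ∀ a, a ∈ S ↔ (e a : β) ∈ T) :
    G.induce S ≃g H.induce T where
  toEquiv := e.toEquiv.subtypeEquiv hST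
  map_rel_iff' := by
    intro a b
    exact e.map_rel_iff

lemma HasNoCutVertex.of_iso {α β : Type} {G : SimpleGraph α} {H : SimpleGraph β}
    (e : G ≃g H) (hH : H.HasNoCutVertex) : G.HasNoCutVertex := by
  intro v
  have i := isoInduce e {u | u ≠ v} {u | u ≠ e v}
    (fun a => by simp [EmbeddingLike.apply_eq_iff_eq])
  exact i.preconnected_iff.mpr (hH (e v))

/-- Transfer of "cycle or clique" along an isomorphism of subgraph coercions. -/
lemma transfer_cycOrClique {α β : Type} {Gα : SimpleGraph α} {Gβ : SimpleGraph β}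
    {B1 : Gα.Subgraph} {B2 : Gβ.Subgraph} (e : B1.coe ≃g B2.coe)
    (h : (∃ n : ℕ, 3 ≤ n ∧ Nonempty (B2.coe ≃g cycleGraph n)) ∨
      (∀ u v : B2.verts, u ≠ v → B2.coe.Adj u v)) :
    (∃ n : ℕ, 3 ≤ n ∧ Nonempty (B1.coe ≃g cycleGraph n)) ∨
      (∀ u v : B1.verts, u ≠ v → B1.coe.Adj u v) := by
  rcases h with ⟨n, hn, ⟨i⟩⟩ | h
  · exact Or.inl ⟨n, hn, ⟨e.trans i⟩⟩
  · refine Or.inr fun u v huv => ?_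
    exact e.map_rel_iff.mp (h (e u) (e v) (fun hh => huv (e.toEquiv.injective hh)))

/-! ### Lifting subgraphs of induced subgraphs -/

variable {V : Type} {G : SimpleGraph V}

/-- Lift a subgraph of `G.induce A` to a subgraph of `G`. -/
def liftSub (A : Set V) (B : (G.induce A).Subgraph) : G.Subgraph where
  verts := Subtype.val '' B.verts
  Adj u w := ∃ (hu : u ∈ A) (hw : w ∈ A), B.Adj ⟨u, hu⟩ ⟨w, hw⟩
  adj_sub := by rintro u w ⟨hu, hw, h⟩; exact B.adj_sub h
  edge_vert := by rintro u w ⟨hu, hw, h⟩; exact ⟨⟨u, hu⟩, B.edge_vert h, rfl⟩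
  symm := ⟨by rintro u w ⟨hu, hw, h⟩; exact ⟨hw, hu, h.symm⟩⟩

noncomputable def liftSubIso (A : Set V) (B : (G.induce A).Subgraph) : B.coe ≃g (liftSub A B).coe where
  toEquiv := Equiv.Set.image Subtype.val B.verts Subtype.val_injective
  map_rel_iff' := by
    intro x y
    constructor
    · rintro ⟨hu, hw, h⟩
      exact h
    · intro h
      exact ⟨x.1.2, y.1.2, h⟩

lemma liftSub_le_rev {A : Set V} {B B' : (G.induce A).Subgraph}
    (h : liftSub A B ≤ liftSub A B') : B ≤ B' := by
  constructor
  · intro x hx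
    obtain ⟨y, hy, hyx⟩ := h.1 ⟨x, hx, rfl⟩
    rwa [show y = x from Subtype.ext hyx] at hy
  · intro x y hxy
    obtain ⟨hu, hw, h'⟩ := h.2 ⟨x.2, y.2, by
      rwa [show (⟨(x : V), x.2⟩ : ↥A) = x from Subtype.ext rfl,
        show (⟨(y : V), y.2⟩ : ↥A) = y from Subtype.ext rfl]⟩
    rwa [show (⟨(x : V), hu⟩ : ↥A) = x from Subtype.ext rfl,
      show (⟨(y : V), hw⟩ : ↥A) = y from Subtype.ext rfl] at h'

/-- Restrict a subgraph of `G` whose vertices lie in `A` to a subgraph of `G.induce A`. -/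
def restrictSub (A : Set V) (B : G.Subgraph) : (G.induce A).Subgraph where
  verts := Subtype.val ⁻¹' B.verts
  Adj x y := B.Adj x.val y.val
  adj_sub := fun h => B.adj_sub h
  edge_vert := fun h => B.edge_vert h
  symm := ⟨fun _ _ h => h.symm⟩

lemma liftSub_restrictSub {A : Set V} (B : G.Subgraph) (hB : B.verts ⊆ A) :
    liftSub A (restrictSub A B) = B := by
  ext u w
  · constructor
    · rintro ⟨x, hx, rfl⟩; exact hx
    · intro hu; exact ⟨⟨u, hB hu⟩, hu, rfl⟩
  · constructor
    · rintro ⟨hu, hw, h⟩; exact h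
    · intro h; exact ⟨hB (B.edge_vert h), hB (B.edge_vert h.symm), h⟩

/-! ### Blocks and finiteness -/

instance subgraphFinite [Fintype V] : Finite (G.Subgraph) := by
  apply Finite.of_injective (fun B : G.Subgraph => (B.verts, B.Adj))
  rintro B B' h
  exact SimpleGraph.Subgraph.ext (congrArg Prod.fst h) (congrArg Prod.snd h)

lemma exists_block_above [Fintype V] (B : G.Subgraph) (hc : B.coe.Connected)
    (hnc : B.coe.HasNoCutVertex) : ∃ C : G.Subgraph, B ≤ C ∧ G.IsBlock C := by
  obtain ⟨M, hM, hmax⟩ := Set.Finite.exists_maximalFor id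
    {C : G.Subgraph | B ≤ C ∧ C.coe.Connected ∧ C.coe.HasNoCutVertex} (Set.toFinite _)
    ⟨B, le_rfl, hc, hnc⟩
  exact ⟨M, hM.1, hM.2.1, hM.2.2,
    fun B' hle hc' hnc' => le_antisymm (hmax ⟨hM.1.trans hle, hc', hnc'⟩ hle) hle⟩

/-! ### Walk separation -/

lemma walk_stay {v : V} {A : Set V} (hA : ∀ ⦃u w⦄, G.Adj u w → u ∈ A → u ≠ v → w ∈ A)
    {u w : V} (p : G.Walk u w) (hu : u ∈ A) (hv : v ∉ p.support) : w ∈ A := by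
  induction p with
  | nil => exact hu
  | @cons a b c h q ih =>
      rw [SimpleGraph.Walk.support_cons, List.mem_cons, not_or] at hv
      exact ih (hA h hu (fun hh => hv.1 hh.symm)) hv.2

lemma block_verts_subset {v : V} {A : Set V}
    (hA : ∀ ⦃u w⦄, G.Adj u w → u ∈ A → u ≠ v → w ∈ A) (hvA : v ∈ A)
    (B : G.Subgraph) (hc : B.coe.Connected) (hnc : B.coe.HasNoCutVertex)
    {u : V} (hu : u ∈ B.verts) (huA : u ∈ A) (huv : u ≠ v) : B.verts ⊆ A := by
  intro w hw
  by_contra hwA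
  by_cases hvB : v ∈ B.verts
  · have hne_u : (⟨u, hu⟩ : B.verts) ≠ ⟨v, hvB⟩ := fun h => huv (congrArg Subtype.val h)
    have hne_w : (⟨w, hw⟩ : B.verts) ≠ ⟨v, hvB⟩ := by
      intro h; exact hwA (by rw [show w = v from congrArg Subtype.val h]; exact hvA)
    obtain ⟨q⟩ := hnc ⟨v, hvB⟩ ⟨⟨u, hu⟩, hne_u⟩ ⟨⟨w, hw⟩, hne_w⟩
    let f : (B.coe.induce {x | x ≠ (⟨v, hvB⟩ : B.verts)}) →g G :=
      B.hom.comp (SimpleGraph.Embedding.induce _).toHom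
    have hsup : v ∉ (q.map f).support := by
      rw [SimpleGraph.Walk.support_map]
      intro hmem
      obtain ⟨x, _, hxv⟩ := List.mem_map.mp hmem
      exact x.2 (Subtype.ext hxv)
    exact hwA (walk_stay hA (q.map f) huA hsup)
  · obtain ⟨q⟩ := hc ⟨u, hu⟩ ⟨w, hw⟩
    have hsup : v ∉ (q.map B.hom).support := by
      rw [SimpleGraph.Walk.support_map]
      intro hmem
      obtain ⟨x, _, hxv⟩ := List.mem_map.mp hmem
      exact hvB (hxv ▸ x.2)
    exact hwA (walk_stay hA (q.map B.hom) huA hsup)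

end BlockCactusProof
namespace BlockCactusProof
open SimpleGraph

/-! ### Reachability helpers -/

lemma reach_invariant {α : Type} {G' : SimpleGraph α} (P : α → Prop)
    (h : ∀ ⦃x y⦄, G'.Adj x y → (P x ↔ P y)) {x y : α} (hr : G'.Reachable x y) :
    P x ↔ P y := by
  obtain ⟨p⟩ := hr
  induction p with
  | nil => rfl
  | cons ha _ ih => exact (h ha).trans ih

lemma reach_map_of_adj {α β : Type} {G' : SimpleGraph α} {H' : SimpleGraph β} (f : α → β)
    (hf : ∀ ⦃x y⦄, G'.Adj x y → H'.Reachable (f x) (f y)) {x y : α}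
    (h : G'.Reachable x y) : H'.Reachable (f x) (f y) := by
  obtain ⟨p⟩ := h
  induction p with
  | nil => rfl
  | cons ha _ ih => exact (hf ha).trans ih

/-! ### Gluing two trees by a bridge -/

section Glue
variable {ι1 ι2 : Type} (T1 : SimpleGraph ι1) (T2 : SimpleGraph ι2) (t1 : ι1) (t2 : ι2)

def glueTree : SimpleGraph (ι1 ⊕ ι2) where
  Adj x y := (∃ a b, x = .inl a ∧ y = .inl b ∧ T1.Adj a b) ∨
             (∃ a b, x = .inr a ∧ y = .inr b ∧ T2.Adj a b) ∨
             (x = .inl t1 ∧ y = .inr t2) ∨ (x = .inr t2 ∧ y = .inl t1)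
  symm := by
    constructor
    rintro x y (⟨a, b, rfl, rfl, h⟩ | ⟨a, b, rfl, rfl, h⟩ | ⟨rfl, rfl⟩ | ⟨rfl, rfl⟩)
    · exact Or.inl ⟨b, a, rfl, rfl, h.symm⟩
    · exact Or.inr (Or.inl ⟨b, a, rfl, rfl, h.symm⟩)
    · exact Or.inr (Or.inr (Or.inr ⟨rfl, rfl⟩))
    · exact Or.inr (Or.inr (Or.inl ⟨rfl, rfl⟩))
  loopless := by
    constructor
    rintro x (⟨a, b, rfl, hab, h⟩ | ⟨a, b, rfl, hab, h⟩ | ⟨rfl, hh⟩ | ⟨rfl, hh⟩)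
    · cases hab; exact h.ne rfl
    · cases hab; exact h.ne rfl
    · exact absurd hh (by simp)
    · exact absurd hh (by simp)

variable {T1 T2 t1 t2}

lemma glue_adj_ll {a b : ι1} : (glueTree T1 T2 t1 t2).Adj (.inl a) (.inl b) ↔ T1.Adj a b := by
  constructor
  · rintro (⟨a', b', ha, hb, h⟩ | ⟨a', b', ha, hb, h⟩ | ⟨ha, hb⟩ | ⟨ha, hb⟩) <;>
      simp_all
  · intro h; exact Or.inl ⟨a, b, rfl, rfl, h⟩

lemma glue_adj_rr {a b : ι2} : (glueTree T1 T2 t1 t2).Adj (.inr a) (.inr b) ↔ T2.Adj a b := by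
  constructor
  · rintro (⟨a', b', ha, hb, h⟩ | ⟨a', b', ha, hb, h⟩ | ⟨ha, hb⟩ | ⟨ha, hb⟩) <;>
      simp_all
  · intro h; exact Or.inr (Or.inl ⟨a, b, rfl, rfl, h⟩)

lemma glue_adj_lr {a : ι1} {b : ι2} :
    (glueTree T1 T2 t1 t2).Adj (.inl a) (.inr b) ↔ a = t1 ∧ b = t2 := by
  constructor
  · rintro (⟨a', b', ha, hb, h⟩ | ⟨a', b', ha, hb, h⟩ | ⟨ha, hb⟩ | ⟨ha, hb⟩) <;>
      simp_all
  · rintro ⟨rfl, rfl⟩; exact Or.inr (Or.inr (Or.inl ⟨rfl, rfl⟩))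

def glueInl : T1 →g glueTree T1 T2 t1 t2 :=
  ⟨Sum.inl, fun h => Or.inl ⟨_, _, rfl, rfl, h⟩⟩

def glueInr : T2 →g glueTree T1 T2 t1 t2 :=
  ⟨Sum.inr, fun h => Or.inr (Or.inl ⟨_, _, rfl, rfl, h⟩)⟩

lemma glueTree_connected (h1 : T1.Connected) (h2 : T2.Connected) :
    (glueTree T1 T2 t1 t2).Connected := by
  have hbr : (glueTree T1 T2 t1 t2).Adj (.inl t1) (.inr t2) := glue_adj_lr.mpr ⟨rfl, rfl⟩
  haveI : Nonempty (ι1 ⊕ ι2) := ⟨.inl h1.nonempty.some⟩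
  have key : ∀ z : ι1 ⊕ ι2, (glueTree T1 T2 t1 t2).Reachable z (.inl t1) := by
    rintro (a | b)
    · exact (h1 a t1).map (glueInl (T2 := T2) (t1 := t1) (t2 := t2))
    · exact ((h2 b t2).map (glueInr (T1 := T1) (t1 := t1) (t2 := t2))).trans hbr.symm.reachable
  exact ⟨fun x y => (key x).trans (key y).symm⟩

lemma glueTree_acyclic (h1 : T1.IsAcyclic) (h2 : T2.IsAcyclic) :
    (glueTree T1 T2 t1 t2).IsAcyclic := by
  rw [isAcyclic_iff_forall_adj_isBridge]
  intro x y hxy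
  rw [isBridge_iff]
  have hdel : ∀ {x' y' : ι1 ⊕ ι2},
      ((glueTree T1 T2 t1 t2) \ fromEdgeSet {s(x, y)}).Adj x' y' →
      (glueTree T1 T2 t1 t2).Adj x' y' ∧ s(x', y') ≠ s(x, y) := by
    intro x' y' h
    refine ⟨h.1, fun he => ?_⟩
    exact h.2 (by rw [fromEdgeSet_adj]; exact ⟨by simp [he], h.1.ne⟩)
  rcases hxy with ⟨a, b, rfl, rfl, hab⟩ | ⟨a, b, rfl, rfl, hab⟩ | ⟨hx, hy⟩ | ⟨hx, hy⟩
  · -- edge inside T1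
    intro hreach
    have hproj : ∀ ⦃x' y' : ι1 ⊕ ι2⦄,
        ((glueTree T1 T2 t1 t2) \ fromEdgeSet {s(.inl a, .inl b)}).Adj x' y' →
        (T1 \ fromEdgeSet {s(a, b)}).Reachable (Sum.elim id (fun _ => t1) x')
          (Sum.elim id (fun _ => t1) y') := by
      intro x' y' h
      obtain ⟨hadj, hne⟩ := hdel h
      rcases hadj with ⟨c, d, rfl, rfl, hcd⟩ | ⟨c, d, rfl, rfl, hcd⟩ | ⟨hx', hy'⟩ | ⟨hx', hy'⟩
      · refine SimpleGraph.Adj.reachable ?_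
        refine ⟨hcd, fun hmem => ?_⟩
        rw [fromEdgeSet_adj] at hmem
        refine hne ?_
        have hcd_eq : s(c, d) = s(a, b) := by simpa using hmem.1
        rw [Sym2.eq_iff] at hcd_eq ⊢
        rcases hcd_eq with ⟨rfl, rfl⟩ | ⟨rfl, rfl⟩
        · exact Or.inl ⟨rfl, rfl⟩
        · exact Or.inr ⟨rfl, rfl⟩
      · exact Reachable.refl _
      · subst hx' hy'; exact Reachable.refl _
      · subst hx' hy'; exact Reachable.refl _
    have := reach_map_of_adj _ hproj hreach
    simp only [Sum.elim_inl, id] at this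
    have hbridge := isAcyclic_iff_forall_adj_isBridge.mp h1 hab
    rw [isBridge_iff] at hbridge
    exact hbridge this
  · -- edge inside T2
    intro hreach
    have hproj : ∀ ⦃x' y' : ι1 ⊕ ι2⦄,
        ((glueTree T1 T2 t1 t2) \ fromEdgeSet {s(.inr a, .inr b)}).Adj x' y' →
        (T2 \ fromEdgeSet {s(a, b)}).Reachable (Sum.elim (fun _ => t2) id x')
          (Sum.elim (fun _ => t2) id y') := by
      intro x' y' h
      obtain ⟨hadj, hne⟩ := hdel h
      rcases hadj with ⟨c, d, rfl, rfl, hcd⟩ | ⟨c, d, rfl, rfl, hcd⟩ | ⟨hx', hy'⟩ | ⟨hx', hy'⟩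
      · exact Reachable.refl _
      · refine SimpleGraph.Adj.reachable ?_
        refine ⟨hcd, fun hmem => ?_⟩
        rw [fromEdgeSet_adj] at hmem
        refine hne ?_
        have hcd_eq : s(c, d) = s(a, b) := by simpa using hmem.1
        rw [Sym2.eq_iff] at hcd_eq ⊢
        rcases hcd_eq with ⟨rfl, rfl⟩ | ⟨rfl, rfl⟩
        · exact Or.inl ⟨rfl, rfl⟩
        · exact Or.inr ⟨rfl, rfl⟩
      · subst hx' hy'; exact Reachable.refl _
      · subst hx' hy'; exact Reachable.refl _
    have := reach_map_of_adj _ hproj hreach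
    simp only [Sum.elim_inr, id] at this
    have hbridge := isAcyclic_iff_forall_adj_isBridge.mp h2 hab
    rw [isBridge_iff] at hbridge
    exact hbridge this
  · -- the bridge edge, x = inl t1, y = inr t2
    subst hx hy
    intro hreach
    have hside := reach_invariant (fun z => ∃ c, z = Sum.inl c) ?_ hreach
    · simp at hside
    · intro x' y' h
      obtain ⟨hadj, hne⟩ := hdel h
      rcases hadj with ⟨c, d, rfl, rfl, hcd⟩ | ⟨c, d, rfl, rfl, hcd⟩ | ⟨hx', hy'⟩ | ⟨hx', hy'⟩
      · simp
      · simp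
      · exact absurd (by rw [hx', hy']) hne
      · exact absurd (by rw [hx', hy', Sym2.eq_swap]) hne
  · -- the bridge edge reversed: x = inr t2, y = inl t1
    subst hx hy
    intro hreach
    have hside := reach_invariant (fun z => ∃ c, z = Sum.inl c) ?_ hreach.symm
    · simp at hside
    · intro x' y' h
      obtain ⟨hadj, hne⟩ := hdel h
      rcases hadj with ⟨c, d, rfl, rfl, hcd⟩ | ⟨c, d, rfl, rfl, hcd⟩ | ⟨hx', hy'⟩ | ⟨hx', hy'⟩
      · simp
      · simp
      · exact absurd (by rw [hx', hy', Sym2.eq_swap]) hne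
      · exact absurd (by rw [hx', hy']) hne

lemma glueTree_isTree (h1 : T1.IsTree) (h2 : T2.IsTree) :
    (glueTree T1 T2 t1 t2).IsTree :=
  ⟨glueTree_connected h1.1 h2.1, glueTree_acyclic h1.2 h2.2⟩

end Glue
end BlockCactusProof
namespace BlockCactusProof
open SimpleGraph

/-- The block-cactus property. -/
def BC {V : Type} (G : SimpleGraph V) : Prop :=
  ∀ B : G.Subgraph, G.IsBlock B →
    (∃ n : ℕ, 3 ≤ n ∧ Nonempty (B.coe ≃g cycleGraph n)) ∨
    (∀ u v : B.verts, u ≠ v → B.coe.Adj u v)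

lemma BC_induce {V : Type} [Fintype V] {G : SimpleGraph V} {A : Set V} {v : V} (hvA : v ∈ A)
    (hA : ∀ ⦃u w⦄, G.Adj u w → u ∈ A → u ≠ v → w ∈ A) (hBC : BC G) : BC (G.induce A) := by
  intro B1 hB1
  obtain ⟨hc1, hnc1, hmax1⟩ := hB1
  by_cases hex : ∃ u : ↥A, u ∈ B1.verts ∧ (u : V) ≠ v
  · obtain ⟨u, huB, huv⟩ := hex
    have e : B1.coe ≃g (liftSub A B1).coe := liftSubIso A B1
    have hcB : (liftSub A B1).coe.Connected := e.connected_iff.mp hc1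
    have hncB : (liftSub A B1).coe.HasNoCutVertex := HasNoCutVertex.of_iso e.symm hnc1
    obtain ⟨C, hBle, hCblock⟩ := exists_block_above (liftSub A B1) hcB hncB
    have huC : (u : V) ∈ C.verts := hBle.1 ⟨u, huB, rfl⟩
    have hCA : C.verts ⊆ A := block_verts_subset hA hvA C hCblock.1 hCblock.2.1 huC u.2 huv
    have hliftC : liftSub A (restrictSub A C) = C := liftSub_restrictSub C hCA
    have hle : B1 ≤ restrictSub A C := liftSub_le_rev (by rw [hliftC]; exact hBle)
    have e0 : (restrictSub A C).coe ≃g (liftSub A (restrictSub A C)).coe :=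
      liftSubIso A (restrictSub A C)
    rw [hliftC] at e0
    have hc1' : (restrictSub A C).coe.Connected := e0.connected_iff.mpr hCblock.1
    have hnc1' : (restrictSub A C).coe.HasNoCutVertex := HasNoCutVertex.of_iso e0 hCblock.2.1
    have hB1eq : restrictSub A C = B1 := hmax1 _ hle hc1' hnc1'
    have efin : B1.coe ≃g C.coe := by rw [← hB1eq]; exact e0
    exact transfer_cycOrClique efin (hBC C hCblock)
  · push_neg at hex
    refine Or.inr fun x y hxy => absurd ?_ hxy
    have hx := hex x.1 x.2
    have hy := hex y.1 y.2
    exact Subtype.ext (Subtype.ext (hx.trans hy.symm))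

end BlockCactusProof
namespace BlockCactusProof
open SimpleGraph

lemma botPUnit_isTree : (⊥ : SimpleGraph PUnit).IsTree := by
  constructor
  · exact ⟨fun u v => by rw [Subsingleton.elim u v]⟩
  · intro v c hc
    exact hc.ne_bot rfl

/-- Decomposition for the empty graph. -/
lemma empty_decomp {V : Type} (G : SimpleGraph V) [IsEmpty V] :
    ∃ D : G.TreeDecomp, Good D := by
  refine ⟨⟨PUnit, ⊥, botPUnit_isTree, fun _ => ∅,
    fun v => isEmptyElim v, fun u v h => isEmptyElim u, fun v => isEmptyElim v⟩, ?_⟩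
  intro t s hs _
  have : s = ∅ := Finset.eq_empty_of_forall_notMem fun x hx => (hs hx).elim
  simp [this]

/-- Decomposition for a complete graph. -/
lemma clique_decomp {V : Type} [Nonempty V] (G : SimpleGraph V)
    (hclq : ∀ u v : V, u ≠ v → G.Adj u v) : ∃ D : G.TreeDecomp, Good D := by
  refine ⟨⟨PUnit, ⊥, botPUnit_isTree, fun _ => Set.univ,
    fun v => ⟨PUnit.unit, trivial⟩, fun u v _ => ⟨PUnit.unit, trivial, trivial⟩,
    fun v => ?_⟩, ?_⟩
  · haveI : Nonempty ↥{t : PUnit | v ∈ (Set.univ : Set V)} := ⟨⟨PUnit.unit, Set.mem_univ v⟩⟩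
    exact ⟨fun a b => by rw [Subsingleton.elim a b]⟩
  · intro t s hs hind
    refine le_trans (Finset.card_le_one.mpr fun a ha b hb => ?_) (by norm_num)
    by_contra hab
    exact hind a ha b hb hab (hclq a b hab)

lemma pathGraph_acyclic (n : ℕ) : (pathGraph n).IsAcyclic := by
  rw [isAcyclic_iff_forall_adj_isBridge]
  have key : ∀ a b : Fin n, (a : ℕ) + 1 = b →
      ¬(pathGraph n \ fromEdgeSet {s(a, b)}).Reachable a b := by
    intro a b hab hreach
    have hstep : ∀ ⦃x y : Fin n⦄, (pathGraph n \ fromEdgeSet {s(a, b)}).Adj x y →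
        (((x : ℕ) ≤ (a : ℕ)) ↔ ((y : ℕ) ≤ (a : ℕ))) := by
      intro x y h
      obtain ⟨hadj, hne⟩ : (pathGraph n).Adj x y ∧ ¬(fromEdgeSet {s(a, b)}).Adj x y := h
      rw [pathGraph_adj] at hadj
      constructor
      · intro hx
        by_contra hy
        have hxa : x = a := Fin.ext (by omega)
        have hyb : y = b := Fin.ext (by omega)
        refine hne ?_
        rw [fromEdgeSet_adj, hxa, hyb]
        exact ⟨rfl, fun hh => by rw [hh] at hab; omega⟩
      · intro hy
        by_contra hx
        have hxa : x = b := Fin.ext (by omega)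
        have hyb : y = a := Fin.ext (by omega)
        refine hne ?_
        rw [fromEdgeSet_adj, hxa, hyb, Sym2.eq_swap]
        exact ⟨rfl, fun hh => by rw [hh] at hab; omega⟩
    have hinv := reach_invariant (fun z : Fin n => (z : ℕ) ≤ (a : ℕ)) hstep hreach
    have := hinv.mp le_rfl
    omega
  intro x y hxy
  rw [isBridge_iff]
  rcases pathGraph_adj.mp hxy with h | h
  · exact key x y h
  · intro hreach
    refine key y x h ?_
    rw [Sym2.eq_swap] at hreach
    exact hreach.symm

end BlockCactusProof
namespace BlockCactusProof
open SimpleGraph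

lemma cycle_decomp {V : Type} {m : ℕ} {G : SimpleGraph V} (f : G ≃g cycleGraph (m + 3)) :
    ∃ D : G.TreeDecomp, Good D := by
  have hadj_succ : ∀ i : Fin (m + 3), (cycleGraph (m + 3)).Adj i (i + 1) := by
    intro i
    exact cycleGraph_adj.mpr (Or.inr (add_sub_cancel_left i 1))
  refine ⟨⟨Fin (m + 3), pathGraph (m + 3),
    ⟨pathGraph_connected (m + 2), pathGraph_acyclic (m + 3)⟩,
    fun i => {x | f x = 0 ∨ f x = i ∨ f x = i + 1}, ?_, ?_, ?_⟩, ?_⟩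
  · exact fun v => ⟨f v, Or.inr (Or.inl rfl)⟩
  · intro u w h
    have hc : (cycleGraph (m + 3)).Adj (f u) (f w) := f.map_rel_iff.mpr h
    rcases cycleGraph_adj.mp hc with h1 | h1
    · have h2 : f u = f w + 1 := (eq_add_of_sub_eq h1).trans (add_comm 1 (f w))
      exact ⟨f w, Or.inr (Or.inr h2), Or.inr (Or.inl rfl)⟩
    · have h2 : f w = f u + 1 := (eq_add_of_sub_eq h1).trans (add_comm 1 (f u))
      exact ⟨f u, Or.inr (Or.inl rfl), Or.inr (Or.inr h2)⟩
  · intro v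
    by_cases hv0 : f v = 0
    · rw [show {t : Fin (m + 3) | v ∈ {x | f x = 0 ∨ f x = t ∨ f x = t + 1}} = Set.univ from
        Set.eq_univ_of_forall fun i => Or.inl hv0]
      exact (induceUnivIso (pathGraph (m + 3))).connected_iff.mpr (pathGraph_connected (m + 2))
    · rw [show {t : Fin (m + 3) | v ∈ {x | f x = 0 ∨ f x = t ∨ f x = t + 1}} =
          {f v - 1, f v} from ?_]
      · have hvpos : ((f v : Fin (m + 3)) : ℕ) ≠ 0 := fun h => hv0 (Fin.ext h)
        have hadj : (pathGraph (m + 3)).Adj (f v - 1) (f v) := by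
          rw [pathGraph_adj]
          left
          rw [Fin.coe_sub_one, if_neg hv0]
          omega
        have key : ∀ x : ↥({f v - 1, f v} : Set (Fin (m + 3))),
            ((pathGraph (m + 3)).induce {f v - 1, f v}).Reachable x ⟨f v, Or.inr rfl⟩ := by
          rintro ⟨x1, hx | hx⟩
          · subst hx
            exact SimpleGraph.Adj.reachable (by exact hadj)
          · subst hx
            exact Reachable.refl _
        haveI : Nonempty ↥({f v - 1, f v} : Set (Fin (m + 3))) := ⟨⟨f v, Or.inr rfl⟩⟩
        exact ⟨fun x y => (key x).trans (key y).symm⟩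
      · ext i
        simp only [Set.mem_setOf_eq, Set.mem_insert_iff, Set.mem_singleton_iff]
        constructor
        · rintro (h | h | h)
          · exact absurd h hv0
          · exact Or.inr h.symm
          · exact Or.inl (eq_sub_of_add_eq h.symm)
        · rintro (rfl | rfl)
          · exact Or.inr (Or.inr (sub_add_cancel _ _).symm)
          · exact Or.inr (Or.inl rfl)
  · intro i s hs hind
    classical
    have hmem : ∀ x ∈ s, x = f.symm 0 ∨ x = f.symm i ∨ x = f.symm (i + 1) := by
      intro x hx
      rcases hs hx with h | h | h
      · exact Or.inl ((Equiv.eq_symm_apply _).mpr h)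
      · exact Or.inr (Or.inl ((Equiv.eq_symm_apply _).mpr h))
      · exact Or.inr (Or.inr ((Equiv.eq_symm_apply _).mpr h))
    have hfi : (f (f.symm i) : Fin (m + 3)) = i := f.toEquiv.apply_symm_apply i
    have hfi1 : (f (f.symm (i + 1)) : Fin (m + 3)) = i + 1 := f.toEquiv.apply_symm_apply (i + 1)
    have hadj : G.Adj (f.symm i) (f.symm (i + 1)) := by
      rw [← f.map_rel_iff, hfi, hfi1]
      exact hadj_succ i
    have hne : f.symm i ≠ f.symm (i + 1) := hadj.ne
    by_cases h1 : f.symm (i + 1) ∈ s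
    · have h0 : f.symm i ∉ s := fun h2 => hind _ h2 _ h1 hne hadj
      have hsub : s ⊆ {f.symm 0, f.symm (i + 1)} := by
        intro x hx
        rcases hmem x hx with rfl | rfl | rfl
        · exact Finset.mem_insert_self _ _
        · exact absurd hx h0
        · exact Finset.mem_insert_of_mem (Finset.mem_singleton_self _)
      exact (Finset.card_le_card hsub).trans ((Finset.card_insert_le _ _).trans (by norm_num))
    · have hsub : s ⊆ {f.symm 0, f.symm i} := by
        intro x hx
        rcases hmem x hx with rfl | rfl | rfl
        · exact Finset.mem_insert_self _ _
        · exact Finset.mem_insert_of_mem (Finset.mem_singleton_self _)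
        · exact absurd hx h1
      exact (Finset.card_le_card hsub).trans ((Finset.card_insert_le _ _).trans (by norm_num))

end BlockCactusProof
namespace BlockCactusProof
open SimpleGraph

lemma glue_decomp {V : Type} {G : SimpleGraph V} {A B : Set V}
    (hUnion : ∀ x : V, x ∈ A ∨ x ∈ B)
    (hcross : ∀ ⦃u w⦄, G.Adj u w → (u ∈ A ∧ w ∈ A) ∨ (u ∈ B ∧ w ∈ B))
    (D1 : (G.induce A).TreeDecomp) (D2 : (G.induce B).TreeDecomp)
    (g1 : Good D1) (g2 : Good D2) (t1 : D1.ι) (t2 : D2.ι)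
    (hb1 : ∀ x (hxA : x ∈ A), x ∈ B → ⟨x, hxA⟩ ∈ D1.bag t1)
    (hb2 : ∀ x (hxB : x ∈ B), x ∈ A → ⟨x, hxB⟩ ∈ D2.bag t2) :
    ∃ D : G.TreeDecomp, Good D := by
  classical
  refine ⟨⟨D1.ι ⊕ D2.ι, glueTree D1.tree D2.tree t1 t2,
    glueTree_isTree D1.isTree D2.isTree,
    Sum.elim (fun t => Subtype.val '' D1.bag t) (fun t => Subtype.val '' D2.bag t),
    ?_, ?_, ?_⟩, ?_⟩
  · intro v
    rcases hUnion v with hv | hv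
    · obtain ⟨t, ht⟩ := D1.bags_cover_vertices ⟨v, hv⟩
      exact ⟨.inl t, ⟨⟨v, hv⟩, ht, rfl⟩⟩
    · obtain ⟨t, ht⟩ := D2.bags_cover_vertices ⟨v, hv⟩
      exact ⟨.inr t, ⟨⟨v, hv⟩, ht, rfl⟩⟩
  · intro u w h
    rcases hcross h with ⟨hu, hw⟩ | ⟨hu, hw⟩
    · obtain ⟨t, h1, h2⟩ := D1.bags_cover_edges (show (G.induce A).Adj ⟨u, hu⟩ ⟨w, hw⟩ from h)
      exact ⟨.inl t, ⟨⟨u, hu⟩, h1, rfl⟩, ⟨⟨w, hw⟩, h2, rfl⟩⟩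
    · obtain ⟨t, h1, h2⟩ := D2.bags_cover_edges (show (G.induce B).Adj ⟨u, hu⟩ ⟨w, hw⟩ from h)
      exact ⟨.inr t, ⟨⟨u, hu⟩, h1, rfl⟩, ⟨⟨w, hw⟩, h2, rfl⟩⟩
  · intro v
    by_cases hvA : v ∈ A
    · by_cases hvB : v ∈ B
      · -- v in both: the bag-sets on the two sides joined by the bridge
        have hset : {t : D1.ι ⊕ D2.ι |
            v ∈ Sum.elim (fun t => Subtype.val '' D1.bag t) (fun t => Subtype.val '' D2.bag t) t}
            = Sum.inl '' {t | ⟨v, hvA⟩ ∈ D1.bag t} ∪ Sum.inr '' {t | ⟨v, hvB⟩ ∈ D2.bag t} := by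
          ext (t | t)
          · simp only [Set.mem_setOf_eq, Sum.elim_inl, Set.mem_union, Set.mem_image]
            constructor
            · rintro ⟨x, hx, rfl⟩
              exact Or.inl ⟨t, by rwa [show (⟨(x : V), hvA⟩ : ↥A) = x from Subtype.ext rfl],
                rfl⟩
            · rintro (⟨x, hx, hxt⟩ | ⟨x, hx, hxt⟩)
              · cases hxt; exact ⟨⟨v, hvA⟩, hx, rfl⟩
              · cases hxt
          · simp only [Set.mem_setOf_eq, Sum.elim_inr, Set.mem_union, Set.mem_image]
            constructor
            · rintro ⟨x, hx, rfl⟩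
              exact Or.inr ⟨t, by rwa [show (⟨(x : V), hvB⟩ : ↥B) = x from Subtype.ext rfl],
                rfl⟩
            · rintro (⟨x, hx, hxt⟩ | ⟨x, hx, hxt⟩)
              · cases hxt
              · cases hxt; exact ⟨⟨v, hvB⟩, hx, rfl⟩
        rw [hset]
        set S1 : Set D1.ι := {t | ⟨v, hvA⟩ ∈ D1.bag t} with hS1
        set S2 : Set D2.ι := {t | ⟨v, hvB⟩ ∈ D2.bag t} with hS2
        set SU : Set (D1.ι ⊕ D2.ι) := Sum.inl '' S1 ∪ Sum.inr '' S2 with hSU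
        have ht1S : (Sum.inl t1 : D1.ι ⊕ D2.ι) ∈ SU := Or.inl ⟨t1, hb1 v hvA hvB, rfl⟩
        have ht2S : (Sum.inr t2 : D1.ι ⊕ D2.ι) ∈ SU := Or.inr ⟨t2, hb2 v hvB hvA, rfl⟩
        let F1 : (D1.tree.induce S1) →g ((glueTree D1.tree D2.tree t1 t2).induce SU) :=
          ⟨fun x => ⟨.inl x.1, Or.inl ⟨x.1, x.2, rfl⟩⟩, fun h => glue_adj_ll.mpr h⟩
        let F2 : (D2.tree.induce S2) →g ((glueTree D1.tree D2.tree t1 t2).induce SU) :=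
          ⟨fun x => ⟨.inr x.1, Or.inr ⟨x.1, x.2, rfl⟩⟩, fun h => glue_adj_rr.mpr h⟩
        have hbr : ((glueTree D1.tree D2.tree t1 t2).induce SU).Adj ⟨.inr t2, ht2S⟩
            ⟨.inl t1, ht1S⟩ := Or.inr (Or.inr (Or.inr ⟨rfl, rfl⟩))
        have key : ∀ x : ↥SU, ((glueTree D1.tree D2.tree t1 t2).induce SU).Reachable x
            ⟨.inl t1, ht1S⟩ := by
          rintro ⟨x, ⟨a, ha, rfl⟩ | ⟨a, ha, rfl⟩⟩
          · exact ((D1.bags_connected ⟨v, hvA⟩) ⟨a, ha⟩ ⟨t1, hb1 v hvA hvB⟩).map F1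
          · exact (((D2.bags_connected ⟨v, hvB⟩) ⟨a, ha⟩ ⟨t2, hb2 v hvB hvA⟩).map F2).trans
              hbr.reachable
        haveI : Nonempty ↥SU := ⟨⟨.inl t1, ht1S⟩⟩
        exact ⟨fun x y => (key x).trans (key y).symm⟩
      · -- v only in A
        have hset : {t : D1.ι ⊕ D2.ι |
            v ∈ Sum.elim (fun t => Subtype.val '' D1.bag t) (fun t => Subtype.val '' D2.bag t) t}
            = Sum.inl '' {t | ⟨v, hvA⟩ ∈ D1.bag t} := by
          ext (t | t)
          · simp only [Set.mem_setOf_eq, Sum.elim_inl, Set.mem_image]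
            constructor
            · rintro ⟨x, hx, rfl⟩
              exact ⟨t, by rwa [show (⟨(x : V), hvA⟩ : ↥A) = x from Subtype.ext rfl], rfl⟩
            · rintro ⟨x, hx, hxt⟩
              cases hxt; exact ⟨⟨v, hvA⟩, hx, rfl⟩
          · simp only [Set.mem_setOf_eq, Sum.elim_inr, Set.mem_image]
            constructor
            · rintro ⟨x, hx, rfl⟩
              exact absurd x.2 hvB
            · rintro ⟨x, hx, hxt⟩
              cases hxt
        rw [hset]
        set S1 : Set D1.ι := {t | ⟨v, hvA⟩ ∈ D1.bag t} with hS1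
        let F1 : (D1.tree.induce S1) →g
            ((glueTree D1.tree D2.tree t1 t2).induce (Sum.inl '' S1)) :=
          ⟨fun x => ⟨.inl x.1, ⟨x.1, x.2, rfl⟩⟩, fun h => glue_adj_ll.mpr h⟩
        have hsurj : Function.Surjective F1 := by
          rintro ⟨x, a, ha, rfl⟩
          exact ⟨⟨a, ha⟩, rfl⟩
        exact (D1.bags_connected ⟨v, hvA⟩).map F1 hsurj
    · rcases hUnion v with hvA' | hvB
      · exact absurd hvA' hvA
      · -- v only in B
        have hset : {t : D1.ι ⊕ D2.ι |
            v ∈ Sum.elim (fun t => Subtype.val '' D1.bag t) (fun t => Subtype.val '' D2.bag t) t}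
            = Sum.inr '' {t | ⟨v, hvB⟩ ∈ D2.bag t} := by
          ext (t | t)
          · simp only [Set.mem_setOf_eq, Sum.elim_inl, Set.mem_image]
            constructor
            · rintro ⟨x, hx, rfl⟩
              exact absurd x.2 hvA
            · rintro ⟨x, hx, hxt⟩
              cases hxt
          · simp only [Set.mem_setOf_eq, Sum.elim_inr, Set.mem_image]
            constructor
            · rintro ⟨x, hx, rfl⟩
              exact ⟨t, by rwa [show (⟨(x : V), hvB⟩ : ↥B) = x from Subtype.ext rfl], rfl⟩
            · rintro ⟨x, hx, hxt⟩
              cases hxt; exact ⟨⟨v, hvB⟩, hx, rfl⟩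
        rw [hset]
        set S2 : Set D2.ι := {t | ⟨v, hvB⟩ ∈ D2.bag t} with hS2
        let F2 : (D2.tree.induce S2) →g
            ((glueTree D1.tree D2.tree t1 t2).induce (Sum.inr '' S2)) :=
          ⟨fun x => ⟨.inr x.1, ⟨x.1, x.2, rfl⟩⟩, fun h => glue_adj_rr.mpr h⟩
        have hsurj : Function.Surjective F2 := by
          rintro ⟨x, a, ha, rfl⟩
          exact ⟨⟨a, ha⟩, rfl⟩
        exact (D2.bags_connected ⟨v, hvB⟩).map F2 hsurj
  · rintro (t | t) s hs hind
    · have hsA : ∀ x ∈ s, x ∈ A := fun x hx => by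
        obtain ⟨y, _, rfl⟩ := hs hx; exact y.2
      have hcard : (s.subtype (· ∈ A)).card = s.card := by
        rw [Finset.card_subtype, Finset.filter_true_of_mem hsA]
      rw [← hcard]
      apply g1 t
      · intro x hx
        rw [Finset.mem_coe, Finset.mem_subtype] at hx
        obtain ⟨y, hy, hyx⟩ := hs hx
        rwa [show x = y from Subtype.ext hyx.symm]
      · intro u hu w hw hne
        rw [Finset.mem_subtype] at hu hw
        exact hind u.1 hu w.1 hw (fun h => hne (Subtype.ext h))
    · have hsB : ∀ x ∈ s, x ∈ B := fun x hx => by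
        obtain ⟨y, _, rfl⟩ := hs hx; exact y.2
      have hcard : (s.subtype (· ∈ B)).card = s.card := by
        rw [Finset.card_subtype, Finset.filter_true_of_mem hsB]
      rw [← hcard]
      apply g2 t
      · intro x hx
        rw [Finset.mem_coe, Finset.mem_subtype] at hx
        obtain ⟨y, hy, hyx⟩ := hs hx
        rwa [show x = y from Subtype.ext hyx.symm]
      · intro u hu w hw hne
        rw [Finset.mem_subtype] at hu hw
        exact hind u.1 hu w.1 hw (fun h => hne (Subtype.ext h))

end BlockCactusProof
namespace BlockCactusProof
open SimpleGraph

lemma nat_card_lt_of_not_mem {V : Type} [Fintype V] {s : Set V} {x : V} (hx : x ∉ s) :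
    Nat.card ↥s < Nat.card V := by
  rw [Nat.card_coe_set_eq, ← Set.ncard_univ]
  refine Set.ncard_lt_ncard (Set.ssubset_univ_iff.mpr ?_) Set.finite_univ
  intro h
  exact hx (h.symm ▸ Set.mem_univ x)

lemma main : ∀ (n : ℕ) (V : Type) [Fintype V] (G : SimpleGraph V),
    Nat.card V ≤ n → BC G → ∃ D : G.TreeDecomp, Good D := by
  intro n
  induction n with
  | zero =>
      intro V _ G hcard _
      haveI : IsEmpty V := Fintype.card_eq_zero_iff.mp
        (by rw [← Nat.card_eq_fintype_card]; omega)
      exact empty_decomp G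
  | succ n ih =>
      intro V _ G hcard hBC
      classical
      cases isEmpty_or_nonempty V with
      | inl hE => exact empty_decomp G
      | inr hNE =>
        by_cases hpc : G.Preconnected
        · by_cases hnc : G.HasNoCutVertex
          · -- the whole graph is a block: cycle or clique
            have hblock : G.IsBlock ⊤ :=
              ⟨Subgraph.topIso.connected_iff.mpr ⟨hpc⟩,
                HasNoCutVertex.of_iso Subgraph.topIso hnc,
                fun B' h _ _ => le_antisymm le_top h⟩
            rcases hBC ⊤ hblock with ⟨n', hn', ⟨e⟩⟩ | hclq
            · obtain ⟨m, rfl⟩ : ∃ m, n' = m + 3 := ⟨n' - 3, (Nat.sub_add_cancel hn').symm⟩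
              exact cycle_decomp (Subgraph.topIso.symm.trans e)
            · refine clique_decomp G fun u v huv => ?_
              exact hclq ⟨u, trivial⟩ ⟨v, trivial⟩ (fun hh => huv (congrArg Subtype.val hh))
          · -- there is a cut vertex v
            simp only [SimpleGraph.HasNoCutVertex, not_forall] at hnc
            obtain ⟨v, hv⟩ := hnc
            simp only [SimpleGraph.Preconnected, not_forall] at hv
            obtain ⟨x, y, hxy⟩ := hv
            set A0 : Set V := {u : V | ∃ h : u ≠ v, (G.induce {u | u ≠ v}).Reachable x ⟨u, h⟩}
              with hA0
            set A : Set V := insert v A0 with hA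
            set B : Set V := A0ᶜ with hB
            have hvA : v ∈ A := Set.mem_insert v A0
            have hvB : v ∈ B := by rintro ⟨h, -⟩; exact h rfl
            have hclosedA : ∀ ⦃u w⦄, G.Adj u w → u ∈ A → u ≠ v → w ∈ A := by
              intro u w huw hu huv
              obtain ⟨hu', hr⟩ := (Set.mem_insert_iff.mp hu).resolve_left huv
              by_cases hwv : w = v
              · exact hwv ▸ hvA
              · exact Set.mem_insert_of_mem _
                  ⟨hwv, hr.trans (SimpleGraph.Adj.reachable
                    (show (G.induce {u | u ≠ v}).Adj ⟨u, hu'⟩ ⟨w, hwv⟩ from huw))⟩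
            have hclosedB : ∀ ⦃u w⦄, G.Adj u w → u ∈ B → u ≠ v → w ∈ B := by
              intro u w huw hu huv hw0
              obtain ⟨hw', hr⟩ := hw0
              exact hu ⟨huv, hr.trans (SimpleGraph.Adj.reachable
                (show (G.induce {u | u ≠ v}).Adj ⟨w, hw'⟩ ⟨u, huv⟩ from huw.symm))⟩
            have hUnion : ∀ z : V, z ∈ A ∨ z ∈ B := by
              intro z
              by_cases h : z ∈ A0
              · exact Or.inl (Set.mem_insert_of_mem _ h)
              · exact Or.inr h
            have hcross : ∀ ⦃u w⦄, G.Adj u w → (u ∈ A ∧ w ∈ A) ∨ (u ∈ B ∧ w ∈ B) := by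
              intro u w huw
              by_cases huv : u = v
              · subst huv
                by_cases hw : w ∈ A0
                · exact Or.inl ⟨hvA, Set.mem_insert_of_mem _ hw⟩
                · exact Or.inr ⟨hvB, hw⟩
              · by_cases hu : u ∈ A0
                · exact Or.inl ⟨Set.mem_insert_of_mem _ hu,
                    hclosedA huw (Set.mem_insert_of_mem _ hu) huv⟩
                · exact Or.inr ⟨hu, hclosedB huw hu huv⟩
            have hyA : (y : V) ∉ A := by
              intro hy
              rcases Set.mem_insert_iff.mp hy with h | h
              · exact y.2 h
              · obtain ⟨h', hr⟩ := h
                exact hxy (by rwa [Subtype.coe_eta] at hr)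
            have hxB : (x : V) ∉ B :=
              fun h => h ⟨x.2, by rw [Subtype.coe_eta]⟩
            have hcA : Nat.card ↥A ≤ n := by
              have h1 := nat_card_lt_of_not_mem hyA
              omega
            have hcB : Nat.card ↥B ≤ n := by
              have h1 := nat_card_lt_of_not_mem hxB
              omega
            obtain ⟨D1, g1⟩ := ih ↥A (G.induce A) hcA (BC_induce hvA hclosedA hBC)
            obtain ⟨D2, g2⟩ := ih ↥B (G.induce B) hcB (BC_induce hvB hclosedB hBC)
            obtain ⟨s1, hs1⟩ := D1.bags_cover_vertices ⟨v, hvA⟩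
            obtain ⟨s2, hs2⟩ := D2.bags_cover_vertices ⟨v, hvB⟩
            refine glue_decomp hUnion hcross D1 D2 g1 g2 s1 s2 ?_ ?_
            · intro z hzA hzB
              have hz : z = v := (Set.mem_insert_iff.mp hzA).resolve_right
                (fun h => hzB h)
              subst hz; exact hs1
            · intro z hzB hzA
              have hz : z = v := (Set.mem_insert_iff.mp hzA).resolve_right
                (fun h => hzB h)
              subst hz; exact hs2
        · -- disconnected
          simp only [SimpleGraph.Preconnected, not_forall] at hpc
          obtain ⟨x, y, hxy⟩ := hpc
          set A : Set V := {u | G.Reachable x u} with hA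
          set B : Set V := Aᶜ with hB
          have hxA : x ∈ A := Reachable.refl x
          have hyB : y ∈ B := hxy
          have hclosedA : ∀ ⦃u w⦄, G.Adj u w → u ∈ A → u ≠ x → w ∈ A :=
            fun _ _ huw hu _ => hu.trans huw.reachable
          have hclosedB : ∀ ⦃u w⦄, G.Adj u w → u ∈ B → u ≠ y → w ∈ B :=
            fun _ _ huw hu _ hw => hu (hw.trans huw.symm.reachable)
          have hUnion : ∀ z : V, z ∈ A ∨ z ∈ B := fun z => em (z ∈ A)
          have hcross : ∀ ⦃u w⦄, G.Adj u w → (u ∈ A ∧ w ∈ A) ∨ (u ∈ B ∧ w ∈ B) := by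
            intro u w huw
            by_cases hu : u ∈ A
            · exact Or.inl ⟨hu, hu.trans huw.reachable⟩
            · exact Or.inr ⟨hu, fun hw => hu (hw.trans huw.symm.reachable)⟩
          have hyA : y ∉ A := hxy
          have hxB : x ∉ B := not_not_intro hxA
          have hcA : Nat.card ↥A ≤ n := by
            have h1 := nat_card_lt_of_not_mem hyA
            omega
          have hcB : Nat.card ↥B ≤ n := by
            have h1 := nat_card_lt_of_not_mem hxB
            omega
          obtain ⟨D1, g1⟩ := ih ↥A (G.induce A) hcA (BC_induce hxA hclosedA hBC)
          obtain ⟨D2, g2⟩ := ih ↥B (G.induce B) hcB (BC_induce hyB hclosedB hBC)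
          haveI : Nonempty D1.ι := D1.isTree.1.nonempty
          haveI : Nonempty D2.ι := D2.isTree.1.nonempty
          refine glue_decomp hUnion hcross D1 D2 g1 g2 (Classical.arbitrary _)
            (Classical.arbitrary _) ?_ ?_
          · intro z hzA hzB
            exact absurd hzA hzB
          · intro z hzB hzA
            exact absurd hzA hzB

end BlockCactusProof

/-- The tree-independence number of any block-cactus graph
(a graph each of whose blocks is a cycle or a complete graph) is at most `2`. -/
theorem treeIndepNum_le_two_of_blockCactus {V : Type} [Fintype V] (G : SimpleGraph V)
    (hG : ∀ B : G.Subgraph, G.IsBlock B →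
      (∃ n : ℕ, 3 ≤ n ∧ Nonempty (B.coe ≃g cycleGraph n)) ∨
      (∀ u v : B.verts, u ≠ v → B.coe.Adj u v)) :
    G.treeIndepNum ≤ 2 := by
  obtain ⟨D, hD⟩ := BlockCactusProof.main (Nat.card V) V G le_rfl hG
  exact BlockCactusProof.treeIndepNum_le_two' D hD
end

section
/- Let G be a 3-connected graph. Then G is W_4-induced-minor-free if and only if G is chordal. -/
open SimpleGraph

/-! ## Common definitions -/

variable {V : Type} {W : Type}

namespace W4Aux

variable {V : Type} {G : SimpleGraph V}

/-- A chain (walk given by a function) of length `n` staying in `S`. -/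
def ChainOn (G : SimpleGraph V) (S : Set V) (p : ℕ → V) (n : ℕ) : Prop :=
  (∀ i, i ≤ n → p i ∈ S) ∧ ∀ i, i < n → G.Adj (p i) (p (i+1))

/-- connectivity within a set, via chains -/
def Conn (G : SimpleGraph V) (S : Set V) (a b : V) : Prop :=
  ∃ n p, p 0 = a ∧ p n = b ∧ ChainOn G S p n

lemma Conn.refl {S : Set V} {a : V} (ha : a ∈ S) : Conn G S a a :=
  ⟨0, fun _ => a, rfl, rfl, fun i _ => ha, fun i h => absurd h (Nat.not_lt_zero i)⟩

lemma Conn.mem_left {S : Set V} {a b : V} (h : Conn G S a b) : a ∈ S := by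
  obtain ⟨n, p, h0, hn, hS, _⟩ := h
  exact h0 ▸ hS 0 (Nat.zero_le n)

lemma Conn.mem_right {S : Set V} {a b : V} (h : Conn G S a b) : b ∈ S := by
  obtain ⟨n, p, h0, hn, hS, _⟩ := h
  exact hn ▸ hS n le_rfl

lemma Conn.symm {S : Set V} {a b : V} (h : Conn G S a b) : Conn G S b a := by
  obtain ⟨n, p, h0, hn, hS, hadj⟩ := h
  refine ⟨n, fun i => p (n - i), by simp [hn], by simp [h0], fun i hi => hS _ (by omega), ?_⟩
  intro i hi
  show G.Adj (p (n - i)) (p (n - (i+1)))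
  have h1 : n - i = (n - (i+1)) + 1 := by omega
  have := hadj (n - (i+1)) (by omega)
  rw [h1]
  exact this.symm

lemma Conn.trans {S : Set V} {a b c : V} (h1 : Conn G S a b) (h2 : Conn G S b c) :
    Conn G S a c := by
  obtain ⟨n, p, h0, hn, hS, hadj⟩ := h1
  obtain ⟨m, q, g0, gm, gS, gadj⟩ := h2
  refine ⟨n + m, fun i => if i ≤ n then p i else q (i - n), by simp [h0], ?_, ?_, ?_⟩
  · by_cases hm : m = 0
    · subst hm; simpa using hn.trans (g0.symm.trans gm)
    · have : ¬ (n + m ≤ n) := by omega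
      simp only [this, if_false]
      simpa using gm
  · intro i hi
    by_cases h : i ≤ n
    · simpa [h] using hS i h
    · simp only [h, if_false]
      exact gS (i - n) (by omega)
  · intro i hi
    rcases lt_trichotomy i n with h | h | h
    · have : i + 1 ≤ n := by omega
      simp only [le_of_lt h, this, if_true]
      exact hadj i h
    · subst h
      by_cases hm : 0 < m
      · have h2' : ¬ (i + 1 ≤ i) := by omega
        simp only [le_refl, if_true, h2', if_false]
        have : i + 1 - i = 1 := by omega
        rw [this, hn, ← g0]
        exact gadj 0 hm
      · omega
    · have h1' : ¬ (i ≤ n) := by omega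
      have h2' : ¬ (i + 1 ≤ n) := by omega
      simp only [h1', h2', if_false]
      have : i + 1 - n = (i - n) + 1 := by omega
      rw [this]
      exact gadj (i - n) (by omega)

lemma Conn.mono {S T : Set V} (hST : S ⊆ T) {a b : V} (h : Conn G S a b) : Conn G T a b := by
  obtain ⟨n, p, h0, hn, hS, hadj⟩ := h
  exact ⟨n, p, h0, hn, fun i hi => hST (hS i hi), hadj⟩

lemma Conn.adj_right {S : Set V} {a b c : V} (h : Conn G S a b) (hadj : G.Adj b c)
    (hc : c ∈ S) : Conn G S a c :=
  h.trans ⟨1, fun i => if i = 0 then b else c, by simp, by simp, fun i hi => by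
    by_cases h' : i = 0 <;> simp [h', h.mem_right, hc], fun i hi => by
      have : i = 0 := by omega
      simp [this, hadj]⟩

/-- Key invariant principle: a set `W` closed under steps inside `S` traps chains. -/
lemma Conn.invariant {S W : Set V} {a b : V} (h : Conn G S a b) (ha : a ∈ W)
    (hstep : ∀ u y, u ∈ W → G.Adj u y → y ∈ S → y ∈ W) : b ∈ W := by
  obtain ⟨n, p, h0, hn, hS, hadj⟩ := h
  have key : ∀ i, i ≤ n → p i ∈ W := by
    intro i
    induction i with
    | zero => intro _; exact h0 ▸ ha
    | succ j ih =>
      intro hj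
      exact hstep (p j) (p (j+1)) (ih (by omega)) (hadj j (by omega)) (hS (j+1) hj)
  exact hn ▸ key n le_rfl

/-- the connected component of `v` within `S`, as a set of vertices -/
def compS (G : SimpleGraph V) (S : Set V) (v : V) : Set V := {w | Conn G S v w}

lemma compS_subset {S : Set V} {v : V} : compS G S v ⊆ S := fun _ h => h.mem_right

lemma mem_compS_self {S : Set V} {v : V} (hv : v ∈ S) : v ∈ compS G S v := Conn.refl hv

lemma compS_adj_closed {S : Set V} {v w y : V} (hw : w ∈ compS G S v) (hadj : G.Adj w y)
    (hy : y ∈ S) : y ∈ compS G S v := Conn.adj_right hw hadj hy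

lemma compS_eq_of_mem {S : Set V} {v w : V} (hw : w ∈ compS G S v) :
    compS G S w = compS G S v := by
  ext x
  constructor
  · intro hx; exact Conn.trans hw hx
  · intro hx; exact Conn.trans (Conn.symm hw) hx

lemma conn_compS {S : Set V} {v w : V} (hw : w ∈ compS G S v) : Conn G (compS G S v) v w := by
  obtain ⟨n, p, h0, hn, hS, hadj⟩ := hw
  refine ⟨n, p, h0, hn, fun i hi => ?_, hadj⟩
  exact ⟨i, p, h0, rfl, fun j hj => hS j (by omega), fun j hj => hadj j (by omega)⟩

/-- chains give reachability in induced subgraphs -/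
lemma reachable_induce_of_conn {S : Set V} {a b : V} (h : Conn G S a b) :
    (G.induce S).Reachable ⟨a, h.mem_left⟩ ⟨b, h.mem_right⟩ := by
  obtain ⟨n, p, h0, hn, hS, hadj⟩ := h
  subst h0 hn
  induction n generalizing p with
  | zero => exact Reachable.refl _
  | succ m ih =>
    have step : (G.induce S).Adj ⟨p 0, hS 0 (by omega)⟩ ⟨p 1, hS 1 (by omega)⟩ := by
      simp only [comap_adj, Function.Embedding.coe_subtype]
      exact hadj 0 (by omega)
    have tail := ih (fun i => p (i+1)) (fun i hi => hS (i+1) (by omega))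
      (fun i hi => hadj (i+1) (by omega))
    exact (step.reachable).trans tail

lemma connected_induce_of_conn {S : Set V} (hne : S.Nonempty)
    (hconn : ∀ a ∈ S, ∀ b ∈ S, Conn G S a b) : (G.induce S).Connected := by
  obtain ⟨x, hx⟩ := hne
  have : Nonempty ↥S := ⟨⟨x, hx⟩⟩
  refine ⟨fun a b => ?_⟩
  obtain ⟨a, ha⟩ := a
  obtain ⟨b, hb⟩ := b
  exact reachable_induce_of_conn (hconn a ha b hb)

lemma conn_of_walk_induce {S : Set V} : ∀ {x y : ↥S} (_ : (G.induce S).Walk x y),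
    Conn G S x.val y.val := by
  intro x y w
  induction w with
  | nil =>
    rename_i u
    exact Conn.refl u.property
  | cons h p ih =>
    rename_i u v w'
    have hadj : G.Adj u.val v.val := by
      simpa only [comap_adj, Function.Embedding.coe_subtype] using h
    refine Conn.trans ?_ ih
    refine ⟨1, fun i => if i = 0 then u.val else v.val, by simp, by simp,
      fun i hi => by by_cases h' : i = 0 <;> simp [h', u.property, v.property], fun i hi => ?_⟩
    have hi0 : i = 0 := by omega
    subst hi0
    simpa using hadj

lemma conn_of_reachable_induce {S : Set V} {a b : V} (ha : a ∈ S) (hb : b ∈ S)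
    (h : (G.induce S).Reachable ⟨a, ha⟩ ⟨b, hb⟩) : Conn G S a b := by
  obtain ⟨w⟩ := h
  exact conn_of_walk_induce w


/-- cyclic adjacency of indices `i j < k` -/
def CyAdj (k i j : ℕ) : Prop :=
  j = i + 1 ∨ i = j + 1 ∨ (i = 0 ∧ j = k - 1) ∨ (j = 0 ∧ i = k - 1)

lemma cyadj_symm {k i j : ℕ} (h : CyAdj k i j) : CyAdj k j i := by
  unfold CyAdj at *; omega

/-- a hole (induced cycle of length ≥ 4) presented as a function -/
structure IsHole (G : SimpleGraph V) (k : ℕ) (f : ℕ → V) : Prop where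
  big : 4 ≤ k
  inj : ∀ i < k, ∀ j < k, f i = f j → i = j
  adj : ∀ i < k, ∀ j < k, (G.Adj (f i) (f j) ↔ CyAdj k i j)

/-- the vertex set of a hole -/
def holeSet (f : ℕ → V) (k : ℕ) : Set V := {v | ∃ i, i < k ∧ f i = v}

lemma mem_holeSet {f : ℕ → V} {k i : ℕ} (hi : i < k) : f i ∈ holeSet f k := ⟨i, hi, rfl⟩

/-- rotation of indices -/
def rotIdx (k r i : ℕ) : ℕ := if i + r < k then i + r else i + r - k

/-- reflection of indices -/
def refIdx (k i : ℕ) : ℕ := if i = 0 then 0 else k - i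

lemma rotIdx_lt {k r i : ℕ} (hr : r < k) (hi : i < k) : rotIdx k r i < k := by
  unfold rotIdx; split <;> omega

lemma refIdx_lt {k i : ℕ} (hk : 0 < k) (hi : i < k) : refIdx k i < k := by
  unfold refIdx; split <;> omega

lemma cyadj_rot {k r i j : ℕ} (hk : 4 ≤ k) (hr : r < k) (hi : i < k) (hj : j < k) :
    CyAdj k (rotIdx k r i) (rotIdx k r j) ↔ CyAdj k i j := by
  unfold CyAdj rotIdx; split <;> split <;> omega

lemma cyadj_ref {k i j : ℕ} (hk : 4 ≤ k) (hi : i < k) (hj : j < k) :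
    CyAdj k (refIdx k i) (refIdx k j) ↔ CyAdj k i j := by
  unfold CyAdj refIdx; split <;> split <;> omega

lemma IsHole.rot {k : ℕ} {f : ℕ → V} (h : IsHole G k f) (r : ℕ) (hr : r < k) :
    IsHole G k (fun i => f (rotIdx k r i)) := by
  refine ⟨h.big, ?_, ?_⟩
  · intro i hi j hj hf
    have := h.inj _ (rotIdx_lt hr hi) _ (rotIdx_lt hr hj) hf
    unfold rotIdx at this; split at this <;> split at this <;> omega
  · intro i hi j hj
    rw [h.adj _ (rotIdx_lt hr hi) _ (rotIdx_lt hr hj)]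
    exact cyadj_rot h.big hr hi hj

lemma IsHole.ref {k : ℕ} {f : ℕ → V} (h : IsHole G k f) :
    IsHole G k (fun i => f (refIdx k i)) := by
  have hk : 0 < k := by have := h.big; omega
  refine ⟨h.big, ?_, ?_⟩
  · intro i hi j hj hf
    have := h.inj _ (refIdx_lt hk hi) _ (refIdx_lt hk hj) hf
    unfold refIdx at this; split at this <;> split at this <;> omega
  · intro i hi j hj
    rw [h.adj _ (refIdx_lt hk hi) _ (refIdx_lt hk hj)]
    exact cyadj_ref h.big hi hj

lemma holeSet_rot {k : ℕ} {f : ℕ → V} (r : ℕ) (hr : r < k) :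
    holeSet (fun i => f (rotIdx k r i)) k = holeSet f k := by
  ext v
  constructor
  · rintro ⟨i, hi, rfl⟩
    exact ⟨rotIdx k r i, rotIdx_lt hr hi, rfl⟩
  · rintro ⟨i, hi, rfl⟩
    refine ⟨if r ≤ i then i - r else i + k - r, by split <;> omega, ?_⟩
    show f (rotIdx k r (if r ≤ i then i - r else i + k - r)) = f i
    have : rotIdx k r (if r ≤ i then i - r else i + k - r) = i := by
      unfold rotIdx; split <;> split <;> omega
    rw [this]

lemma holeSet_ref {k : ℕ} {f : ℕ → V} (hk : 0 < k) :
    holeSet (fun i => f (refIdx k i)) k = holeSet f k := by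
  ext v
  constructor
  · rintro ⟨i, hi, rfl⟩
    exact ⟨refIdx k i, refIdx_lt hk hi, rfl⟩
  · rintro ⟨i, hi, rfl⟩
    refine ⟨refIdx k i, refIdx_lt hk hi, ?_⟩
    show f (refIdx k (refIdx k i)) = f i
    have : refIdx k (refIdx k i) = i := by
      unfold refIdx; split <;> split <;> omega
    rw [this]

lemma nat_mod_small {t k : ℕ} (hk : 0 < k) (h : t < 2 * k) :
    t % k = if t < k then t else t - k := by
  split
  · exact Nat.mod_eq_of_lt (by omega)
  · rw [Nat.mod_eq_sub_mod (by omega)]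
    exact Nat.mod_eq_of_lt (by omega)

lemma cycleGraph_adj_iff_cyadj {k : ℕ} (hk : 4 ≤ k) (u v : Fin k) :
    (cycleGraph k).Adj u v ↔ CyAdj k u.val v.val := by
  rw [cycleGraph_adj']
  have h1 : (u - v).val = ((k - v.val) + u.val) % k := by rw [Fin.sub_def]
  have h2 : (v - u).val = ((k - u.val) + v.val) % k := by rw [Fin.sub_def]
  have hu := u.isLt
  have hv := v.isLt
  rw [h1, h2, nat_mod_small (by omega) (by omega), nat_mod_small (by omega) (by omega)]
  unfold CyAdj
  split <;> split <;> omega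

/-- a hole yields non-chordality -/
lemma not_chordal_of_isHole {k : ℕ} {f : ℕ → V} (h : IsHole G k f) : ¬ G.IsChordal := by
  intro hc
  refine hc k h.big (holeSet f k) ⟨?_⟩
  have hbij : Function.Bijective (fun i : Fin k => (⟨f i.val, mem_holeSet i.isLt⟩ : ↥(holeSet f k))) := by
    constructor
    · intro i j hij
      simp only [Subtype.mk_eq_mk] at hij
      exact Fin.ext (h.inj _ i.isLt _ j.isLt hij)
    · rintro ⟨v, i, hi, rfl⟩
      exact ⟨⟨i, hi⟩, rfl⟩
  refine ⟨Equiv.ofBijective _ hbij, ?_⟩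
  intro a b
  simp only [Equiv.ofBijective_apply, comap_adj, Function.Embedding.coe_subtype]
  rw [h.adj _ a.isLt _ b.isLt]
  exact (cycleGraph_adj_iff_cyadj h.big a b).symm

/-- non-chordality yields a hole -/
lemma isHole_of_not_chordal (h : ¬ G.IsChordal) :
    ∃ k f, IsHole G k f := by
  unfold SimpleGraph.IsChordal at h
  push_neg at h
  obtain ⟨k, hk, A, ⟨φ⟩⟩ := h
  have hk0 : 0 < k := by omega
  refine ⟨k, fun i => (φ ⟨i % k, Nat.mod_lt _ hk0⟩).val, hk, ?_, ?_⟩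
  · intro i hi j hj hf
    have : (⟨i % k, Nat.mod_lt _ hk0⟩ : Fin k) = ⟨j % k, Nat.mod_lt _ hk0⟩ := by
      apply φ.toEquiv.injective
      exact Subtype.ext hf
    have := Fin.mk.injEq .. ▸ this
    replace this : i % k = j % k := by simpa using this
    rw [Nat.mod_eq_of_lt hi, Nat.mod_eq_of_lt hj] at this
    exact this
  · intro i hi j hj
    have hadj : G.Adj (φ ⟨i % k, Nat.mod_lt _ hk0⟩).val (φ ⟨j % k, Nat.mod_lt _ hk0⟩).val ↔
        (G.induce A).Adj (φ ⟨i % k, Nat.mod_lt _ hk0⟩) (φ ⟨j % k, Nat.mod_lt _ hk0⟩) := by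
      simp only [comap_adj, Function.Embedding.coe_subtype]
    rw [hadj, φ.map_rel_iff]
    rw [cycleGraph_adj_iff_cyadj hk]
    simp only [Nat.mod_eq_of_lt hi, Nat.mod_eq_of_lt hj]

/-- the 3-connectivity bridge -/
lemma conn_compl_of_3conn [Fintype V] (hG : G.IsKConnected 3) (X : Finset V) (hX : X.card < 3)
    {a b : V} (ha : a ∉ X) (hb : b ∉ X) : Conn G ((↑X : Set V)ᶜ) a b := by
  have hc := hG.2 X hX
  have ha' : a ∈ ((↑X : Set V)ᶜ) := by simpa using ha
  have hb' : b ∈ ((↑X : Set V)ᶜ) := by simpa using hb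
  exact conn_of_reachable_induce ha' hb' (hc.preconnected ⟨a, ha'⟩ ⟨b, hb'⟩)

/-- a chain from `a` to `b` whose interior lies in `K` -/
def IChain (G : SimpleGraph V) (K : Set V) (a b : V) (p : ℕ → V) (n : ℕ) : Prop :=
  p 0 = a ∧ p n = b ∧ (∀ i, 0 < i → i < n → p i ∈ K) ∧ (∀ i, i < n → G.Adj (p i) (p (i+1)))

lemma ichain_splice_adj {K : Set V} {a b : V} {p : ℕ → V} {n i j : ℕ}
    (h : IChain G K a b p n) (hij : i < j) (hjn : j ≤ n) (hadj : G.Adj (p i) (p j)) :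
    IChain G K a b (fun s => if s ≤ i then p s else p (s + (j - i - 1))) (n - (j - i - 1)) := by
  obtain ⟨h0, hn, hK, hc⟩ := h
  refine ⟨by simpa using h0, ?_, ?_, ?_⟩
  · have hgt : ¬ (n - (j - i - 1) ≤ i) := by omega
    simp only [hgt, if_false]
    have : n - (j - i - 1) + (j - i - 1) = n := by omega
    rw [this, hn]
  · intro s hs0 hsm
    by_cases hsi : s ≤ i
    · simp only [hsi, if_true]
      exact hK s hs0 (by omega)
    · simp only [hsi, if_false]
      exact hK _ (by omega) (by omega)
  · intro s hsm
    rcases lt_trichotomy s i with hlt | heq | hgt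
    · have h1 : s ≤ i := by omega
      have h2 : s + 1 ≤ i := by omega
      simp only [h1, h2, if_true]
      exact hc s (by omega)
    · subst heq
      have h2 : ¬ (s + 1 ≤ s) := by omega
      simp only [le_refl, if_true, h2, if_false]
      have : s + 1 + (j - s - 1) = j := by omega
      rw [this]
      exact hadj
    · have h1 : ¬ (s ≤ i) := by omega
      have h2 : ¬ (s + 1 ≤ i) := by omega
      simp only [h1, h2, if_false]
      have : s + 1 + (j - i - 1) = (s + (j - i - 1)) + 1 := by omega
      rw [this]
      exact hc _ (by omega)

lemma ichain_splice_eq {K : Set V} {a b : V} {p : ℕ → V} {n i j : ℕ}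
    (h : IChain G K a b p n) (hij : i < j) (hjn : j ≤ n) (heq : p i = p j) :
    IChain G K a b (fun s => if s ≤ i then p s else p (s + (j - i))) (n - (j - i)) := by
  obtain ⟨h0, hn, hK, hc⟩ := h
  refine ⟨by simpa using h0, ?_, ?_, ?_⟩
  · by_cases hni : n - (j - i) ≤ i
    · have hji : j = n := by omega
      have hii : n - (j - i) = i := by omega
      simp only [hni, if_true, hii, le_refl]
      rw [heq, hji, hn]
    · simp only [hni, if_false]
      have : n - (j - i) + (j - i) = n := by omega
      rw [this, hn]
  · intro s hs0 hsm
    by_cases hsi : s ≤ i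
    · simp only [hsi, if_true]
      exact hK s hs0 (by omega)
    · simp only [hsi, if_false]
      exact hK _ (by omega) (by omega)
  · intro s hsm
    rcases lt_trichotomy s i with hlt | heqq | hgt
    · have h1 : s ≤ i := by omega
      have h2 : s + 1 ≤ i := by omega
      simp only [h1, h2, if_true]
      exact hc s (by omega)
    · subst heqq
      have h2 : ¬ (s + 1 ≤ s) := by omega
      simp only [le_refl, if_true, h2, if_false]
      have hjn' : j < n := by omega
      have : s + 1 + (j - s) = j + 1 := by omega
      rw [this, heq]
      exact hc j hjn'
    · have h1 : ¬ (s ≤ i) := by omega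
      have h2 : ¬ (s + 1 ≤ i) := by omega
      simp only [h1, h2, if_false]
      have : s + 1 + (j - i) = (s + (j - i)) + 1 := by omega
      rw [this]
      exact hc _ (by omega)

/-- There is a minimal, hence induced and injective, chain through `K`. -/
lemma exists_min_ichain {K : Set V} {a b : V} (hab : a ≠ b) (hnadj : ¬ G.Adj a b)
    (hex : ∃ n p, IChain G K a b p n) :
    ∃ n p, IChain G K a b p n ∧ 2 ≤ n ∧
      (∀ i, i ≤ n → ∀ j, j ≤ n → p i = p j → i = j) ∧
      (∀ i, i ≤ n → ∀ j, j ≤ n → G.Adj (p i) (p j) → (j = i + 1 ∨ i = j + 1)) := by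
  classical
  obtain ⟨n, ⟨p, hp⟩, hmin⟩ : ∃ n, (∃ p, IChain G K a b p n) ∧
      ∀ m, m < n → ¬ ∃ q, IChain G K a b q m :=
    ⟨Nat.find hex, Nat.find_spec hex, fun m hm => Nat.find_min hex hm⟩
  have hn2 : 2 ≤ n := by
    by_contra hlt
    push_neg at hlt
    interval_cases n
    · exact hab (hp.1.symm.trans hp.2.1)
    · have h01 := hp.2.2.2 0 (by omega)
      rw [hp.1] at h01
      have hb1 : p (0+1) = b := hp.2.1
      rw [hb1] at h01
      exact hnadj h01
  have hinj : ∀ i, i ≤ n → ∀ j, j ≤ n → p i = p j → i = j := by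
    intro i hi j hj hf
    by_contra hne
    rcases Nat.lt_or_ge i j with hij | hij
    · exact hmin _ (by omega) ⟨_, ichain_splice_eq hp hij hj hf⟩
    · have hij' : j < i := by omega
      exact hmin _ (by omega) ⟨_, ichain_splice_eq hp hij' hi hf.symm⟩
  refine ⟨n, p, hp, hn2, hinj, ?_⟩
  intro i hi j hj hadj
  by_contra hne
  push_neg at hne
  rcases Nat.lt_or_ge i j with hij | hij
  · have : i + 1 < j := by
      rcases Nat.lt_or_ge (i+1) j with h | h
      · exact h
      · omega
    exact hmin _ (by omega) ⟨_, ichain_splice_adj hp hij hj hadj⟩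
  · rcases Nat.eq_or_lt_of_le hij with h | hij'
    · subst h
      exact G.irrefl hadj
    · have : j + 1 < i := by omega
      exact hmin _ (by omega) ⟨_, ichain_splice_adj hp hij' hi hadj.symm⟩

/-- an arc of a hole -/
def arcSet (f : ℕ → V) (lo hi : ℕ) : Set V := {v | ∃ i, lo ≤ i ∧ i < hi ∧ f i = v}

lemma conn_arcSet_le {k : ℕ} {f : ℕ → V} (hole : IsHole G k f) {lo hi i j : ℕ}
    (hhi : hi ≤ k) (hi1 : lo ≤ i) (hj2 : j < hi) (hij : i ≤ j) :
    Conn G (arcSet f lo hi) (f i) (f j) := by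
  refine ⟨j - i, fun s => f (i + s), by simp, ?_, ?_, ?_⟩
  · show f (i + (j - i)) = f j
    congr 1
    omega
  · intro s hs
    exact ⟨i + s, by omega, by omega, rfl⟩
  · intro s hs
    show G.Adj (f (i + s)) (f (i + (s+1)))
    have := (hole.adj (i+s) (by omega) (i+s+1) (by omega)).2 (by unfold CyAdj; omega)
    simpa [Nat.add_assoc] using this

lemma conn_arcSet {k : ℕ} {f : ℕ → V} (hole : IsHole G k f) {lo hi i j : ℕ}
    (hhi : hi ≤ k) (hi1 : lo ≤ i) (hi2 : i < hi) (hj1 : lo ≤ j) (hj2 : j < hi) :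
    Conn G (arcSet f lo hi) (f i) (f j) := by
  rcases Nat.le_total i j with h | h
  · exact conn_arcSet_le hole hhi hi1 hj2 h
  · exact (conn_arcSet_le hole hhi hj1 hi2 h).symm

/-- Main construction: a hole plus a connected set, disjoint from the hole, attached to
the hole at (at least) four vertices, gives a `W₄` induced minor. -/
lemma recipe1 {k : ℕ} {f : ℕ → V} (hole : IsHole G k f) (Y : Set V) (y0 : V) (hy0 : y0 ∈ Y)
    (hYconn : ∀ y ∈ Y, Conn G Y y0 y)
    (hYdisj : ∀ i, i < k → f i ∉ Y)
    (o2 o3 o4 : ℕ) (h02 : 0 < o2) (h23 : o2 < o3) (h34 : o3 < o4) (h4k : o4 < k)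
    (hatt1 : ∃ y ∈ Y, G.Adj (f 0) y) (hatt2 : ∃ y ∈ Y, G.Adj (f o2) y)
    (hatt3 : ∃ y ∈ Y, G.Adj (f o3) y) (hatt4 : ∃ y ∈ Y, G.Adj (f o4) y) :
    G.HasInducedMinor (wheelGraph 4) := by
  classical
  have hk := hole.big
  set nLo : ℕ → ℕ := fun m => if m = 0 then 0 else if m = 1 then o2 else if m = 2 then o3 else o4 with hnLo
  set nHi : ℕ → ℕ := fun m => if m = 0 then o2 else if m = 1 then o3 else if m = 2 then o4 else k with hnHi
  set X : Option (Fin 4) → Set V := fun w => match w with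
    | none => Y
    | some t => arcSet f (nLo t.val) (nHi t.val) with hX
  have hbounds : ∀ m, m < 4 → nLo m < nHi m ∧ nHi m ≤ k := by
    intro m hm
    interval_cases m <;> simp [hnLo, hnHi] <;> omega
  have hattm : ∀ m, m < 4 → ∃ y ∈ Y, G.Adj (f (nLo m)) y := by
    intro m hm
    interval_cases m <;> simpa [hnLo] using (by assumption)
  -- membership helpers
  have hmem : ∀ (t : Fin 4) (i : ℕ), nLo t.val ≤ i → i < nHi t.val → f i ∈ X (some t) := by
    intro t i h1 h2
    exact ⟨i, h1, h2, rfl⟩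
  have hmemlo : ∀ (t : Fin 4), f (nLo t.val) ∈ X (some t) := by
    intro t
    exact hmem t _ le_rfl (hbounds t.val t.isLt).1
  -- no arc vertex in Y
  have harcY : ∀ (t : Fin 4) (v : V), v ∈ X (some t) → v ∉ Y := by
    rintro t v ⟨i, h1, h2, rfl⟩
    exact hYdisj i (by have := (hbounds t.val t.isLt).2; omega)
  refine ⟨X, ?_, ?_, ?_⟩
  · -- connectivity
    rintro (_ | t)
    · exact connected_induce_of_conn ⟨y0, hy0⟩
        (fun a ha b hb => (hYconn a ha).symm.trans (hYconn b hb))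
    · refine connected_induce_of_conn ⟨f (nLo t.val), hmemlo t⟩ ?_
      rintro a ⟨i, hi1, hi2, rfl⟩ b ⟨j, hj1, hj2, rfl⟩
      exact conn_arcSet hole (hbounds t.val t.isLt).2 hi1 hi2 hj1 hj2
  · -- pairwise disjoint
    intro w1 w2 hne
    match w1, w2 with
    | none, none => exact absurd rfl hne
    | none, some t =>
      rw [Set.disjoint_left]
      intro v hv hv2
      exact harcY t v hv2 hv
    | some t, none =>
      rw [Set.disjoint_left]
      intro v hv hv2
      exact harcY t v hv hv2
    | some t1, some t2 =>
      rw [Set.disjoint_left]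
      rintro v ⟨i, hi1, hi2, rfl⟩ ⟨j, hj1, hj2, hj3⟩
      have hik : i < k := by have := (hbounds t1.val t1.isLt).2; omega
      have hjk : j < k := by have := (hbounds t2.val t2.isLt).2; omega
      have hij : j = i := hole.inj j hjk i hik hj3
      subst hij
      have ht12 : t1.val ≠ t2.val := fun h => hne (congrArg some (Fin.ext h))
      obtain ⟨m1, hm1⟩ := t1
      obtain ⟨m2, hm2⟩ := t2
      simp only at ht12 hi1 hi2 hj1 hj2
      revert hi1 hi2 hj1 hj2
      simp only [hnLo, hnHi]
      interval_cases m1 <;> interval_cases m2 <;> simp <;> omega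
  · -- adjacency iff
    intro w1 w2 hne
    have noedge : ∀ (t1 t2 : Fin 4), (t1.val + 2 = t2.val ∨ t2.val + 2 = t1.val) →
        ¬ ∃ v1 ∈ X (some t1), ∃ v2 ∈ X (some t2), G.Adj v1 v2 := by
      rintro t1 t2 ht ⟨v1, ⟨i, hi1, hi2, rfl⟩, v2, ⟨j, hj1, hj2, rfl⟩, hadj⟩
      have hik : i < k := by have := (hbounds t1.val t1.isLt).2; omega
      have hjk : j < k := by have := (hbounds t2.val t2.isLt).2; omega
      have hcy := (hole.adj i hik j hjk).1 hadj
      unfold CyAdj at hcy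
      obtain ⟨m1, hm1⟩ := t1
      obtain ⟨m2, hm2⟩ := t2
      simp only at ht hi1 hi2 hj1 hj2
      revert hi1 hi2 hj1 hj2
      simp only [hnLo, hnHi]
      interval_cases m1 <;> interval_cases m2 <;> simp <;> omega
    have edge : ∀ (t1 t2 : Fin 4), (t1.val + 1 = t2.val ∨ (t1.val = 3 ∧ t2.val = 0)) →
        ∃ v1 ∈ X (some t1), ∃ v2 ∈ X (some t2), G.Adj v1 v2 := by
      intro t1 t2 ht
      have h1 := t1.isLt
      have h2 := t2.isLt
      have e1 := (hbounds t1.val h1)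
      have e2 := (hbounds t2.val h2)
      rcases ht with ht | ⟨ht1, ht2⟩
      · -- f (nHi t1 - 1) ~ f (nLo t2) , nHi t1 = nLo t2
        have heq : nHi t1.val = nLo t2.val := by
          obtain ⟨m1, hm1⟩ := t1
          obtain ⟨m2, hm2⟩ := t2
          simp only at ht ⊢
          simp only [hnLo, hnHi]
          interval_cases m1 <;> interval_cases m2 <;> simp <;> omega
        refine ⟨f (nHi t1.val - 1), hmem t1 _ (by omega) (by omega),
               f (nLo t2.val), hmemlo t2, ?_⟩
        rw [← heq]
        refine (hole.adj _ (by omega) _ (by omega)).2 ?_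
        unfold CyAdj; omega
      · -- t1 = 3, t2 = 0 : f (k-1) ~ f 0
        refine ⟨f (k - 1), ?_, f 0, ?_, ?_⟩
        · rw [hX]
          refine ⟨k - 1, ?_, ?_, rfl⟩ <;> simp only [hnLo, hnHi, ht1] <;> simp <;> omega
        · rw [hX]
          refine ⟨0, ?_, ?_, rfl⟩ <;> simp only [hnLo, hnHi, ht2] <;> simp <;> omega
        · refine (hole.adj _ (by omega) _ (by omega)).2 ?_
          unfold CyAdj; omega
    have yedge : ∀ (t : Fin 4), ∃ v1 ∈ X (some t), ∃ v2 ∈ X none, G.Adj v1 v2 := by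
      intro t
      obtain ⟨y, hy, hadj⟩ := hattm t.val t.isLt
      exact ⟨f (nLo t.val), hmemlo t, y, hy, hadj⟩
    match w1, w2 with
    | none, none => exact absurd rfl hne
    | none, some t =>
      constructor
      · intro _
        obtain ⟨v1, hv1, v2, hv2, hadj⟩ := yedge t
        exact ⟨v2, hv2, v1, hv1, hadj.symm⟩
      · intro _
        unfold wheelGraph
        rw [fromRel_adj]
        exact ⟨by simp, Or.inl (Or.inl rfl)⟩
    | some t, none =>
      constructor
      · intro _
        exact yedge t
      · intro _
        unfold wheelGraph
        rw [fromRel_adj]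
        exact ⟨by simp, Or.inr (Or.inl rfl)⟩
    | some t1, some t2 =>
      have hne' : t1 ≠ t2 := fun h => hne (congrArg some h)
      fin_cases t1 <;> fin_cases t2 <;>
        first
        | (exact absurd rfl hne')
        | (exact iff_of_true (by unfold wheelGraph; rw [fromRel_adj]; decide)
            (edge _ _ (by decide)))
        | (exact iff_of_true (by unfold wheelGraph; rw [fromRel_adj]; decide)
            ((fun ⟨v1, h1, v2, h2, ha⟩ => ⟨v2, h2, v1, h1, ha.symm⟩) (edge _ _ (by decide))))
        | (exact iff_of_false (by unfold wheelGraph; rw [fromRel_adj]; decide)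
            (noedge _ _ (by decide)))

lemma exists_sorted_triple {P : ℕ → Prop} {i1 i2 i3 : ℕ} (h1 : P i1) (h2 : P i2) (h3 : P i3)
    (n21 : i2 ≠ i1) (n32 : i3 ≠ i2) (n31 : i3 ≠ i1) :
    ∃ j1 j2 j3, j1 < j2 ∧ j2 < j3 ∧ P j1 ∧ P j2 ∧ P j3 := by
  rcases Nat.lt_trichotomy i1 i2 with h12 | h12 | h12
  · rcases Nat.lt_trichotomy i2 i3 with h23 | h23 | h23
    · exact ⟨i1, i2, i3, h12, h23, h1, h2, h3⟩
    · omega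
    · rcases Nat.lt_trichotomy i1 i3 with h13 | h13 | h13
      · exact ⟨i1, i3, i2, h13, by omega, h1, h3, h2⟩
      · omega
      · exact ⟨i3, i1, i2, h13, h12, h3, h1, h2⟩
  · omega
  · rcases Nat.lt_trichotomy i1 i3 with h13 | h13 | h13
    · exact ⟨i2, i1, i3, h12, h13, h2, h1, h3⟩
    · omega
    · rcases Nat.lt_trichotomy i2 i3 with h23 | h23 | h23
      · exact ⟨i2, i3, i1, h23, by omega, h2, h3, h1⟩
      · omega
      · exact ⟨i3, i2, i1, h23, h12, h3, h2, h1⟩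

/-- Every component of the complement of a hole attaches to ≥ 3 hole vertices
(in a 3-connected graph). -/
lemma three_attachments [Fintype V] (hG : G.IsKConnected 3) {k : ℕ} {f : ℕ → V}
    (hole : IsHole G k f) {v : V} (hv : v ∉ holeSet f k) :
    ∃ i1 i2 i3, i1 < i2 ∧ i2 < i3 ∧ i3 < k ∧
      (∃ x ∈ compS G (holeSet f k)ᶜ v, G.Adj (f i1) x) ∧
      (∃ x ∈ compS G (holeSet f k)ᶜ v, G.Adj (f i2) x) ∧
      (∃ x ∈ compS G (holeSet f k)ᶜ v, G.Adj (f i3) x) := by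
  classical
  have hk := hole.big
  set S : Set V := (holeSet f k)ᶜ with hS
  set K : Set V := compS G S v with hK
  have hvS : v ∈ S := hv
  set A : Finset ℕ := (Finset.range k).filter (fun i => ∃ x ∈ K, G.Adj (f i) x) with hA
  have hprop : ∀ i ∈ A, i < k ∧ ∃ x ∈ K, G.Adj (f i) x := by
    intro i hi
    rw [hA, Finset.mem_filter, Finset.mem_range] at hi
    exact hi
  by_cases hcard : 3 ≤ A.card
  · obtain ⟨i1, hi1⟩ : A.Nonempty := by rw [← Finset.card_pos]; omega
    obtain ⟨i2, hi2⟩ : (A.erase i1).Nonempty := by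
      rw [← Finset.card_pos, Finset.card_erase_of_mem hi1]; omega
    obtain ⟨i3, hi3⟩ : ((A.erase i1).erase i2).Nonempty := by
      rw [← Finset.card_pos, Finset.card_erase_of_mem hi2, Finset.card_erase_of_mem hi1]; omega
    have m2 : i2 ∈ A := Finset.mem_of_mem_erase hi2
    have m3 : i3 ∈ A := Finset.mem_of_mem_erase (Finset.mem_of_mem_erase hi3)
    have ne21 : i2 ≠ i1 := Finset.ne_of_mem_erase hi2
    have ne32 : i3 ≠ i2 := Finset.ne_of_mem_erase hi3
    have ne31 : i3 ≠ i1 := Finset.ne_of_mem_erase (Finset.mem_erase.1 hi3).2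
    obtain ⟨j1, j2, j3, hj12, hj23, hP1, hP2, hP3⟩ :=
      exists_sorted_triple (P := fun i => i < k ∧ ∃ x ∈ K, G.Adj (f i) x) (hprop i1 hi1) (hprop i2 m2) (hprop i3 m3) ne21 ne32 ne31
    exact ⟨j1, j2, j3, hj12, hj23, hP3.1, hP1.2, hP2.2, hP3.2⟩
  · exfalso
    push_neg at hcard
    set X : Finset V := A.image f with hX
    have hXcard : X.card < 3 := lt_of_le_of_lt (Finset.card_image_le) hcard
    have hex : ∃ i0, i0 < k ∧ i0 ∉ A := by
      by_contra hno
      push_neg at hno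
      have hsub : Finset.range k ⊆ A := fun i hi => hno i (Finset.mem_range.1 hi)
      have := Finset.card_le_card hsub
      rw [Finset.card_range] at this
      omega
    obtain ⟨i0, hi0k, hi0A⟩ := hex
    have hvX : v ∉ X := by
      intro hmem
      obtain ⟨i, hiA, hfi⟩ := Finset.mem_image.1 hmem
      exact hv (hfi ▸ mem_holeSet (hprop i hiA).1)
    have hwX : f i0 ∉ X := by
      intro hmem
      obtain ⟨i, hiA, hfi⟩ := Finset.mem_image.1 hmem
      have := hole.inj i (hprop i hiA).1 i0 hi0k hfi
      exact hi0A (this ▸ hiA)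
    have hconn := conn_compl_of_3conn hG X hXcard hvX hwX
    have hfinal : f i0 ∈ K := by
      refine hconn.invariant (mem_compS_self hvS) ?_
      intro u y hu hadj hy
      by_cases hyC : y ∈ holeSet f k
      · obtain ⟨j, hj, rfl⟩ := hyC
        exfalso
        have hjA : j ∈ A := by
          rw [hA, Finset.mem_filter, Finset.mem_range]
          exact ⟨hj, u, hu, hadj.symm⟩
        exact (by simpa using hy : f j ∉ X) (Finset.mem_image.2 ⟨j, hjA, rfl⟩)
      · exact compS_adj_closed hu hadj hyC
    exact (compS_subset hfinal) (mem_holeSet hi0k)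

/-- The cut lemma: if both open arcs between `f 0` and `f β` are nonempty and no
component of the hole complement attaches to the interior of both, then the
two-element set `{f 0, f β}` would be a cutset, contradicting 3-connectivity. -/
lemma kill_lemma [Fintype V] (hG : G.IsKConnected 3) {k : ℕ} {f : ℕ → V}
    (hole : IsHole G k f) {β : ℕ} (hβ2 : 2 ≤ β) (hβk : β + 2 ≤ k)
    (hnocross : ∀ a b, a ∉ holeSet f k → b ∉ holeSet f k → Conn G ((holeSet f k)ᶜ) a b →
      ∀ ρ, 0 < ρ → ρ < β → ∀ q, β < q → q < k → ¬ (G.Adj a (f ρ) ∧ G.Adj b (f q))) :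
    False := by
  classical
  have hk := hole.big
  set S : Set V := (holeSet f k)ᶜ with hS
  set X : Finset V := {f 0, f β} with hX
  have hXcard : X.card < 3 := lt_of_le_of_lt (Finset.card_insert_le _ _) (by simp)
  have hne1 : f 1 ∉ X := by
    rw [hX]
    simp only [Finset.mem_insert, Finset.mem_singleton]
    push_neg
    constructor
    · intro h; have := hole.inj 1 (by omega) 0 (by omega) h; omega
    · intro h; have := hole.inj 1 (by omega) β (by omega) h; omega
  have hne2 : f (β+1) ∉ X := by
    rw [hX]
    simp only [Finset.mem_insert, Finset.mem_singleton]
    push_neg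
    constructor
    · intro h; have := hole.inj (β+1) (by omega) 0 (by omega) h; omega
    · intro h; have := hole.inj (β+1) (by omega) β (by omega) h; omega
  have hconn := conn_compl_of_3conn hG X hXcard hne1 hne2
  set W : Set V := {w | (∃ t, 0 < t ∧ t < β ∧ w = f t) ∨
    (w ∉ holeSet f k ∧ ∃ a, a ∉ holeSet f k ∧ Conn G S a w ∧
      ∃ ρ, 0 < ρ ∧ ρ < β ∧ G.Adj a (f ρ))} with hW
  have hstart : f 1 ∈ W := Or.inl ⟨1, by omega, by omega, rfl⟩
  have hfinal : f (β+1) ∈ W := by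
    refine hconn.invariant hstart ?_
    intro u y hu hadj hy
    have hyX : y ∉ (X : Set V) := hy
    have hy0 : y ≠ f 0 := by intro h; exact hyX (by rw [hX, h]; simp)
    have hyβ : y ≠ f β := by intro h; exact hyX (by rw [hX, h]; simp)
    rcases hu with ⟨t, ht0, htβ, rfl⟩ | ⟨huh, a, ha, hconn', ρ, hρ0, hρβ, haρ⟩
    · by_cases hyC : y ∈ holeSet f k
      · obtain ⟨j, hj, rfl⟩ := hyC
        have hcy := (hole.adj t (by omega) j hj).1 hadj
        have hj0 : j ≠ 0 := fun h => hy0 (by rw [h])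
        have hjβ : j ≠ β := fun h => hyβ (by rw [h])
        left
        refine ⟨j, ?_, ?_, rfl⟩ <;> (unfold CyAdj at hcy; omega)
      · right
        exact ⟨hyC, y, hyC, Conn.refl hyC, t, ht0, htβ, hadj.symm⟩
    · by_cases hyC : y ∈ holeSet f k
      · obtain ⟨j, hj, rfl⟩ := hyC
        have hj0 : j ≠ 0 := fun h => hy0 (by rw [h])
        have hjβ : j ≠ β := fun h => hyβ (by rw [h])
        rcases Nat.lt_or_ge j β with hjlt | hjge
        · left; exact ⟨j, by omega, hjlt, rfl⟩
        · exfalso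
          exact hnocross a u ha huh hconn' ρ hρ0 hρβ j (by omega) hj ⟨haρ, hadj⟩
      · right
        exact ⟨hyC, a, ha, hconn'.adj_right hadj hyC, ρ, hρ0, hρβ, haρ⟩
  rcases hfinal with ⟨t, ht0, htβ, heq⟩ | ⟨hnot, _⟩
  · have := hole.inj (β+1) (by omega) t (by omega) heq
    omega
  · exact hnot (mem_holeSet (by omega))

lemma cyadj_comm {k i j : ℕ} : CyAdj k i j ↔ CyAdj k j i := by unfold CyAdj; omega

/-- Gluing an induced path (with interior off the hole and not attached to the
near arc) with the near arc of a hole produces a new hole. -/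
lemma glue_hole {k n β : ℕ} {f p : ℕ → V} (hole : IsHole G k f)
    (hn : 2 ≤ n) (hβ : 2 ≤ β) (hβk : β + 2 ≤ k)
    (hp0 : p 0 = f 0) (hpn : p n = f β)
    (hpinj : ∀ i, i ≤ n → ∀ j, j ≤ n → p i = p j → i = j)
    (hpadj : ∀ i, i ≤ n → ∀ j, j ≤ n → G.Adj (p i) (p j) → (j = i + 1 ∨ i = j + 1))
    (hpchain : ∀ i, i < n → G.Adj (p i) (p (i+1)))
    (hcross : ∀ i, 0 < i → i < n → ∀ t, 0 < t → t < β → ¬ G.Adj (p i) (f t))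
    (hKC : ∀ i, 0 < i → i < n → ∀ t, t < k → p i ≠ f t) :
    IsHole G (n + β) (fun i => if i ≤ n then p i else f (n + β - i)) := by
  have hk := hole.big
  set f' : ℕ → V := fun i => if i ≤ n then p i else f (n + β - i) with hf'
  have hval : ∀ j, n < j → j < n + β → f' j = f (n + β - j) := by
    intro j h1 h2
    simp only [hf', if_neg (by omega : ¬ j ≤ n)]
  have hvalp : ∀ j, j ≤ n → f' j = p j := by
    intro j h1
    simp only [hf', if_pos h1]
  refine ⟨by omega, ?_, ?_⟩
  · -- injectivity
    have main : ∀ i j, i ≤ j → j < n + β → f' i = f' j → i = j := by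
      intro i j hij hjk heq
      by_cases hjn : j ≤ n
      · rw [hvalp i (by omega), hvalp j hjn] at heq
        exact hpinj i (by omega) j hjn heq
      · push_neg at hjn
        rw [hval j hjn hjk] at heq
        set t := n + β - j with ht
        have htb : 1 ≤ t ∧ t ≤ β - 1 := by omega
        by_cases hin : i ≤ n
        · rw [hvalp i hin] at heq
          exfalso
          rcases Nat.eq_or_lt_of_le (Nat.zero_le i) with h0 | h0
          · rw [← h0, hp0] at heq
            have := hole.inj 0 (by omega) t (by omega) heq
            omega
          · rcases Nat.eq_or_lt_of_le hin with hin' | hin'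
            · rw [hin', hpn] at heq
              have := hole.inj β (by omega) t (by omega) heq
              omega
            · exact hKC i (by omega) (by omega) t (by omega) heq
        · push_neg at hin
          rw [hval i hin (by omega)] at heq
          have := hole.inj (n + β - i) (by omega) t (by omega) heq
          omega
    intro i hi j hj heq
    rcases Nat.le_total i j with h | h
    · exact main i j h hj heq
    · exact (main j i h hi heq.symm).symm
  · -- adjacency
    have main : ∀ i j, i ≤ j → j < n + β → (G.Adj (f' i) (f' j) ↔ CyAdj (n + β) i j) := by
      intro i j hij hjk
      by_cases hjn : j ≤ n
      · -- both on the path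
        rw [hvalp i (by omega), hvalp j hjn]
        constructor
        · intro h
          have := hpadj i (by omega) j hjn h
          unfold CyAdj
          omega
        · intro h
          have hj1 : j = i + 1 := by unfold CyAdj at h; omega
          subst hj1
          exact hpchain i (by omega)
      · push_neg at hjn
        rw [hval j hjn hjk]
        set t := n + β - j with ht
        have htb : 1 ≤ t ∧ t ≤ β - 1 := by omega
        by_cases hin : i ≤ n
        · rw [hvalp i hin]
          rcases Nat.eq_or_lt_of_le (Nat.zero_le i) with h0 | h0
          · -- i = 0
            rw [← h0, hp0]
            rw [hole.adj 0 (by omega) t (by omega)]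
            unfold CyAdj
            omega
          · rcases Nat.eq_or_lt_of_le hin with hin' | hin'
            · -- i = n
              rw [hin', hpn]
              rw [hole.adj β (by omega) t (by omega)]
              unfold CyAdj
              omega
            · -- interior of path vs far arc: no edge either way
              constructor
              · intro h
                exact absurd h (hcross i (by omega) (by omega) t (by omega) (by omega))
              · intro h
                exfalso
                unfold CyAdj at h
                omega
        · push_neg at hin
          rw [hval i hin (by omega)]
          rw [hole.adj (n + β - i) (by omega) t (by omega)]
          unfold CyAdj
          omega
    intro i hi j hj
    rcases Nat.le_total i j with h | h
    · exact main i j h hj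
    · rw [G.adj_comm, cyadj_comm]
      exact main j i h hi

lemma conn_fseg {k : ℕ} {f : ℕ → V} (hole : IsHole G k f) {T : Set V} {lo hi i j : ℕ}
    (hmem : ∀ s, lo ≤ s → s < hi → f s ∈ T) (hhi : hi ≤ k)
    (hi1 : lo ≤ i) (hi2 : i < hi) (hj1 : lo ≤ j) (hj2 : j < hi) :
    Conn G T (f i) (f j) := by
  have main : ∀ i j, lo ≤ i → j < hi → i ≤ j → Conn G T (f i) (f j) := by
    intro i j h1 h2 hij
    refine ⟨j - i, fun s => f (i + s), by simp, ?_, ?_, ?_⟩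
    · show f (i + (j - i)) = f j
      congr 1
      omega
    · intro s hs
      exact hmem (i + s) (by omega) (by omega)
    · intro s hs
      show G.Adj (f (i + s)) (f (i + (s+1)))
      have := (hole.adj (i+s) (by omega) (i+s+1) (by omega)).2 (by unfold CyAdj; omega)
      simpa [Nat.add_assoc] using this
  rcases Nat.le_total i j with h | h
  · exact main i j hi1 hj2 h
  · exact (main j i hj1 hi2 h).symm

lemma ichain_of_conn {K : Set V} {a b x y : V} (hax : G.Adj a x) (hyb : G.Adj y b)
    (h : Conn G K x y) : ∃ n p, IChain G K a b p n := by
  obtain ⟨m, c, h0, hm, hK, hc⟩ := h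
  refine ⟨m + 2, fun i => if i = 0 then a else if i ≤ m + 1 then c (i-1) else b, by simp, ?_, ?_, ?_⟩
  · simp only [if_neg (by omega : ¬ (m + 2 = 0)), if_neg (by omega : ¬ (m + 2 ≤ m + 1))]
  · intro i h1 h2
    simp only [if_neg (by omega : ¬ (i = 0)), if_pos (by omega : i ≤ m + 1)]
    exact hK (i - 1) (by omega)
  · intro i hi
    by_cases h0' : i = 0
    · subst h0'
      simp only [if_pos rfl, if_neg (by omega : ¬ (0 + 1 = 0)), if_pos (by omega : 0 + 1 ≤ m + 1)]
      simpa using h0 ▸ hax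
    · by_cases h1' : i ≤ m
      · simp only [if_neg h0', if_pos (by omega : i ≤ m + 1), if_neg (by omega : ¬ (i + 1 = 0)),
          if_pos (by omega : i + 1 ≤ m + 1)]
        have := hc (i - 1) (by omega)
        have heq : i - 1 + 1 = i := by omega
        rw [heq] at this
        have heq2 : i + 1 - 1 = i - 1 + 1 := by omega
        rw [heq2, heq]
        exact this
      · have hieq : i = m + 1 := by omega
        subst hieq
        simp only [if_neg h0', if_pos (le_refl (m+1)), if_neg (by omega : ¬ (m + 1 + 1 = 0)),
          if_neg (by omega : ¬ (m + 1 + 1 ≤ m + 1))]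
        have : c (m + 1 - 1) = y := by rw [show m + 1 - 1 = m by omega, hm]
        rw [this]
        exact hyb

/-- Claim B: a hole, a component `K` attached exactly at indices `{0, β, γ}`, and a
different component attached both to the near arc `(0,β)` and to the far arc `(β,k)`,
yield a `W₄` induced minor. -/
lemma claimB [Fintype V] {k : ℕ} {f : ℕ → V} (hole : IsHole G k f)
    {β γ : ℕ} (hβ0 : 0 < β) (hβγ : β < γ) (hγk : γ < k)
    {v : V} (hv : v ∉ holeSet f k)
    (hattK : ∀ i, i < k →
      ((∃ x ∈ compS G ((holeSet f k)ᶜ) v, G.Adj (f i) x) ↔ (i = 0 ∨ i = β ∨ i = γ)))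
    {a b : V} (ha : a ∉ holeSet f k) (hb : b ∉ holeSet f k)
    (hconnab : Conn G ((holeSet f k)ᶜ) a b)
    {ρ q : ℕ} (hρ0 : 0 < ρ) (hρβ : ρ < β) (hqβ : β < q) (hqk : q < k)
    (haρ : G.Adj a (f ρ)) (hbq : G.Adj b (f q)) :
    G.HasInducedMinor (wheelGraph 4) := by
  classical
  have hk := hole.big
  set S : Set V := (holeSet f k)ᶜ with hS
  set K : Set V := compS G S v with hK
  have hβ2 : 2 ≤ β := by omega
  have hβk2 : β + 2 ≤ k := by omega
  have haS : a ∈ S := ha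
  have hbS : b ∈ S := hb
  have hKC : ∀ x, x ∈ K → x ∉ holeSet f k := fun x hx => compS_subset hx
  have haK : a ∉ K := by
    intro haK
    have := (hattK ρ (by omega)).1 ⟨a, haK, haρ.symm⟩
    omega
  have hLK : ∀ x, x ∈ compS G S a → x ∉ K := by
    intro x hx hxK
    apply haK
    have h1 : compS G S x = compS G S a := compS_eq_of_mem hx
    have h2 : compS G S x = K := compS_eq_of_mem hxK
    have h3 : a ∈ compS G S x := h1.symm ▸ mem_compS_self haS
    exact h2 ▸ h3
  have hbK : b ∉ K := hLK b hconnab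
  have hne0β : f 0 ≠ f β := by
    intro h
    have := hole.inj 0 (by omega) β (by omega) h
    omega
  have hnadj0β : ¬ G.Adj (f 0) (f β) := by
    intro h
    have := (hole.adj 0 (by omega) β (by omega)).1 h
    unfold CyAdj at this
    omega
  obtain ⟨x0, hx0K, hadj0⟩ := (hattK 0 (by omega)).2 (Or.inl rfl)
  obtain ⟨x1, hx1K, hadjβ⟩ := (hattK β (by omega)).2 (Or.inr (Or.inl rfl))
  have hconnx : Conn G K x0 x1 := (conn_compS hx0K).symm.trans (conn_compS hx1K)
  obtain ⟨n, p, hip, hn2, hpinj, hpadj⟩ :=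
    exists_min_ichain hne0β hnadj0β (ichain_of_conn hadj0 hadjβ.symm hconnx)
  obtain ⟨hp0, hpn, hpK, hpchain⟩ := hip
  have hcross : ∀ i, 0 < i → i < n → ∀ t, 0 < t → t < β → ¬ G.Adj (p i) (f t) := by
    intro i h1 h2 t ht1 ht2 hadj
    have := (hattK t (by omega)).1 ⟨p i, hpK i h1 h2, hadj.symm⟩
    omega
  have hKC' : ∀ i, 0 < i → i < n → ∀ t, t < k → p i ≠ f t := by
    intro i h1 h2 t ht heq
    exact hKC (p i) (hpK i h1 h2) (heq ▸ mem_holeSet ht)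
  have hole' := glue_hole hole hn2 hβ2 hβk2 hp0 hpn hpinj hpadj hpchain hcross hKC'
  set f' : ℕ → V := fun i => if i ≤ n then p i else f (n + β - i) with hf'
  set C' : Set V := holeSet f' (n + β) with hC'
  have hvalp : ∀ j, j ≤ n → f' j = p j := by
    intro j h1
    simp only [hf', if_pos h1]
  have hvalf : ∀ j, n < j → f' j = f (n + β - j) := by
    intro j h1
    simp only [hf', if_neg (by omega : ¬ j ≤ n)]
  have hnotC' : ∀ w, (∀ i, i ≤ n → p i ≠ w) → (∀ t, 0 < t → t < β → f t ≠ w) → w ∉ C' := by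
    rintro w hw1 hw2 ⟨i, hik, heq⟩
    by_cases hin : i ≤ n
    · exact hw1 i hin (by rw [← heq, hvalp i hin])
    · push_neg at hin
      exact hw2 (n + β - i) (by omega) (by omega) (by rw [← heq, hvalf i hin])
  have hQnot : ∀ s, β < s → s < k → f s ∉ C' := by
    intro s h1 h2
    apply hnotC'
    · intro i hin heq
      rcases Nat.eq_zero_or_pos i with h0 | h0
      · subst h0
        rw [hp0] at heq
        have := hole.inj 0 (by omega) s h2 heq
        omega
      · rcases Nat.eq_or_lt_of_le hin with hn' | hn'
        · rw [hn', hpn] at heq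
          have := hole.inj β (by omega) s h2 heq
          omega
        · exact hKC' i h0 hn' s h2 heq
    · intro t ht1 ht2 heq
      have := hole.inj t (by omega) s h2 heq
      omega
  have hγnot : f γ ∉ C' := hQnot γ hβγ hγk
  set M : Set V := compS G (C'ᶜ) (f γ) with hM
  have hγM : f γ ∈ M := mem_compS_self hγnot
  have hQM : ∀ s, β < s → s < k → f s ∈ M := by
    intro s h1 h2
    show Conn G (C'ᶜ) (f γ) (f s)
    exact conn_fseg hole (T := (C'ᶜ)) (lo := β+1) (hi := k)
      (fun u hu1 hu2 => hQnot u (by omega) hu2) le_rfl (by omega) hγk (by omega) h2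
  have hoffC' : ∀ x, x ∉ holeSet f k → x ∉ K → x ∉ C' := by
    intro x hx1 hx2
    apply hnotC'
    · intro i hin heq
      rcases Nat.eq_zero_or_pos i with h0 | h0
      · subst h0
        rw [hp0] at heq
        exact hx1 (heq ▸ mem_holeSet (show (0:ℕ) < k by omega))
      · rcases Nat.eq_or_lt_of_le hin with hn' | hn'
        · rw [hn', hpn] at heq
          exact hx1 (heq ▸ mem_holeSet (show β < k by omega))
        · exact hx2 (heq ▸ hpK i h0 hn')
    · intro t ht1 ht2 heq
      exact hx1 (heq ▸ mem_holeSet (show t < k by omega))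
  have hbnotC' : b ∉ C' := hoffC' b hb hbK
  have hbM : b ∈ M := compS_adj_closed (hQM q hqβ hqk) hbq.symm hbnotC'
  have hLnotC' : ∀ x ∈ compS G S a, x ∈ (C'ᶜ) := by
    intro x hx
    exact hoffC' x (compS_subset hx) (hLK x hx)
  have haM : a ∈ M := by
    have h1 : Conn G (compS G S a) a b := conn_compS hconnab
    have h2 : Conn G (C'ᶜ) a b := h1.mono hLnotC'
    exact Conn.trans hbM h2.symm
  obtain ⟨xg, hxgK, hadjγ⟩ := (hattK γ (by omega)).2 (Or.inr (Or.inr rfl))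
  have hattint : ∃ s, 0 < s ∧ s < n ∧ ∃ m ∈ M, G.Adj (f' s) m := by
    by_cases hcase : ∃ s, 0 < s ∧ s < n ∧ xg = p s
    · obtain ⟨s, hs1, hs2, rfl⟩ := hcase
      refine ⟨s, hs1, hs2, f γ, hγM, ?_⟩
      rw [hvalp s (by omega)]
      exact hadjγ.symm
    · have hxgnot : xg ∉ C' := by
        apply hnotC'
        · intro i hin heq
          rcases Nat.eq_zero_or_pos i with h0 | h0
          · subst h0
            rw [hp0] at heq
            exact hKC xg hxgK (heq ▸ mem_holeSet (show (0:ℕ) < k by omega))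
          · rcases Nat.eq_or_lt_of_le hin with hn' | hn'
            · rw [hn', hpn] at heq
              exact hKC xg hxgK (heq ▸ mem_holeSet (show β < k by omega))
            · exact hcase ⟨i, h0, hn', heq.symm⟩
        · intro t ht1 ht2 heq
          exact hKC xg hxgK (heq ▸ mem_holeSet (show t < k by omega))
      have hxgM : xg ∈ M := compS_adj_closed hγM hadjγ hxgnot
      have hp1K : p 1 ∈ K := hpK 1 (by omega) (by omega)
      obtain ⟨N, c, hc0, hcN, hcK, hcadj⟩ : Conn G K xg (p 1) :=
        (conn_compS hxgK).symm.trans (conn_compS hp1K)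
      have hPex : ∃ t, t ≤ N ∧ ∃ s, 0 < s ∧ s < n ∧ c t = p s :=
        ⟨N, le_rfl, 1, by omega, by omega, hcN⟩
      obtain ⟨t0, ⟨ht0N, s, hs1, hs2, hct0⟩, hmin⟩ :
          ∃ t, (t ≤ N ∧ ∃ s, 0 < s ∧ s < n ∧ c t = p s) ∧
            ∀ u, u < t → ¬ (u ≤ N ∧ ∃ s, 0 < s ∧ s < n ∧ c u = p s) :=
        ⟨Nat.find hPex, Nat.find_spec hPex, fun u hu => Nat.find_min hPex hu⟩
      have ht0pos : 0 < t0 := by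
        rcases Nat.eq_zero_or_pos t0 with h0 | h0
        · exfalso
          rw [h0] at hct0
          rw [hc0] at hct0
          exact hcase ⟨s, hs1, hs2, hct0⟩
        · exact h0
      have hearly : ∀ u, u < t0 → c u ∈ (C'ᶜ) := by
        intro u hu
        have hcuK : c u ∈ K := hcK u (by omega)
        apply hnotC'
        · intro i hin heq
          rcases Nat.eq_zero_or_pos i with hh0 | hh0
          · subst hh0
            rw [hp0] at heq
            exact hKC _ hcuK (heq ▸ mem_holeSet (show (0:ℕ) < k by omega))
          · rcases Nat.eq_or_lt_of_le hin with hn' | hn'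
            · rw [hn', hpn] at heq
              exact hKC _ hcuK (heq ▸ mem_holeSet (show β < k by omega))
            · exact hmin u hu ⟨by omega, i, hh0, hn', heq.symm⟩
        · intro t ht1 ht2 heq
          exact hKC _ hcuK (heq ▸ mem_holeSet (show t < k by omega))
      have hpredM : c (t0 - 1) ∈ M := by
        have hcc : Conn G (C'ᶜ) xg (c (t0 - 1)) :=
          ⟨t0 - 1, c, hc0, rfl, fun u hu => hearly u (by omega),
            fun u hu => hcadj u (by omega)⟩
        exact Conn.trans ((conn_compS hxgM).mono compS_subset) hcc
      refine ⟨s, hs1, hs2, c (t0 - 1), hpredM, ?_⟩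
      have hstep : G.Adj (c (t0 - 1)) (c t0) := by
        have := hcadj (t0 - 1) (by omega)
        rwa [show t0 - 1 + 1 = t0 by omega] at this
      rw [hvalp s (by omega), ← hct0]
      exact hstep.symm
  obtain ⟨s, hs1, hs2, hsatt⟩ := hattint
  refine recipe1 hole' M (f γ) hγM (fun y hy => conn_compS hy) ?_
    s n (n + β - ρ) hs1 hs2 (by omega) (by omega) ?_ hsatt ?_ ?_
  · intro i hik hiM
    exact (compS_subset hiM) (mem_holeSet hik)
  · refine ⟨f (k - 1), hQM (k-1) (by omega) (by omega), ?_⟩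
    have h0 : f' 0 = f 0 := by rw [hvalp 0 (by omega), hp0]
    rw [h0]
    exact (hole.adj 0 (by omega) (k-1) (by omega)).2 (by unfold CyAdj; omega)
  · refine ⟨f (β + 1), hQM (β+1) (by omega) (by omega), ?_⟩
    have h0 : f' n = f β := by rw [hvalp n le_rfl, hpn]
    rw [h0]
    exact (hole.adj β (by omega) (β+1) (by omega)).2 (by unfold CyAdj; omega)
  · refine ⟨a, haM, ?_⟩
    have h0 : f' (n + β - ρ) = f ρ := by
      rw [hvalf (n + β - ρ) (by omega)]
      congr 1
      omega
    rw [h0]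
    exact haρ.symm

lemma exists_offhole [Fintype V] (hG : G.IsKConnected 3) {k : ℕ} {f : ℕ → V}
    (hole : IsHole G k f) : ∃ v, v ∉ holeSet f k := by
  classical
  have hk := hole.big
  by_contra hno
  push_neg at hno
  set X : Finset V := {f 0, f 2} with hX
  have hXcard : X.card < 3 := lt_of_le_of_lt (Finset.card_insert_le _ _) (by simp)
  have hne1 : f 1 ∉ X := by
    rw [hX]
    simp only [Finset.mem_insert, Finset.mem_singleton]
    push_neg
    constructor
    · intro h; have := hole.inj 1 (by omega) 0 (by omega) h; omega
    · intro h; have := hole.inj 1 (by omega) 2 (by omega) h; omega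
  have hne3 : f 3 ∉ X := by
    rw [hX]
    simp only [Finset.mem_insert, Finset.mem_singleton]
    push_neg
    constructor
    · intro h; have := hole.inj 3 (by omega) 0 (by omega) h; omega
    · intro h; have := hole.inj 3 (by omega) 2 (by omega) h; omega
  have hconn := conn_compl_of_3conn hG X hXcard hne1 hne3
  have hfinal : f 3 ∈ ({f 1} : Set V) := by
    refine hconn.invariant rfl ?_
    intro u y hu hadj hy
    have huu : u = f 1 := hu
    subst huu
    exfalso
    obtain ⟨j, hj, rfl⟩ := hno y
    have hcy := (hole.adj 1 (by omega) j hj).1 hadj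
    have hyX : (f j) ∉ (X : Set V) := hy
    have hj0 : j ≠ 0 := by
      intro h
      exact hyX (by rw [hX, h]; simp)
    have hj2 : j ≠ 2 := by
      intro h
      exact hyX (by rw [hX, h]; simp)
    unfold CyAdj at hcy
    omega
  have := hole.inj 3 (by omega) 1 (by omega) hfinal
  omega

/-- One pair of attachments of a component with exactly three attachments, in
normalized position: either we find the wheel, or the near arc is a single edge. -/
lemma pair_step [Fintype V] (hG : G.IsKConnected 3) {k : ℕ} {f : ℕ → V}
    (hole : IsHole G k f) {β γ : ℕ}
    (hβ0 : 0 < β) (hβγ : β < γ) (hγk : γ < k)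
    {v : V} (hv : v ∉ holeSet f k)
    (hattK : ∀ i, i < k →
      ((∃ x ∈ compS G ((holeSet f k)ᶜ) v, G.Adj (f i) x) ↔ (i = 0 ∨ i = β ∨ i = γ))) :
    G.HasInducedMinor (wheelGraph 4) ∨ β = 1 := by
  by_cases hβ1 : β = 1
  · exact Or.inr hβ1
  · left
    have hβ2 : 2 ≤ β := by omega
    by_cases hcr : ∃ a b, a ∉ holeSet f k ∧ b ∉ holeSet f k ∧ Conn G ((holeSet f k)ᶜ) a b ∧
        ∃ ρ, 0 < ρ ∧ ρ < β ∧ ∃ q, β < q ∧ q < k ∧ G.Adj a (f ρ) ∧ G.Adj b (f q)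
    · obtain ⟨a, b, ha, hb, hconn, ρ, h1, h2, q, h3, h4, haρ, hbq⟩ := hcr
      exact claimB hole hβ0 hβγ hγk hv hattK ha hb hconn h1 h2 h3 h4 haρ hbq
    · exfalso
      refine kill_lemma hG hole hβ2 (by omega) ?_
      intro a b ha hb hconn ρ h1 h2 q h3 h4 hpair
      exact hcr ⟨a, b, ha, hb, hconn, ρ, h1, h2, q, h3, h4, hpair.1, hpair.2⟩

/-- The hard direction: a 3-connected non-chordal graph has a `W₄` induced minor. -/
lemma hard_direction [Fintype V] (hG : G.IsKConnected 3) (hnc : ¬ G.IsChordal) :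
    G.HasInducedMinor (wheelGraph 4) := by
  classical
  obtain ⟨k, f, hole⟩ := isHole_of_not_chordal hnc
  have hk := hole.big
  obtain ⟨v, hv⟩ := exists_offhole hG hole
  set S : Set V := (holeSet f k)ᶜ with hS
  set K : Set V := compS G S v with hK
  have hvS : v ∈ S := hv
  set att : ℕ → Prop := fun i => ∃ x ∈ K, G.Adj (f i) x with hatt
  obtain ⟨i1, i2, i3, h12, h23, h3k, hx1, hx2, hx3⟩ := three_attachments hG hole hv
  by_cases hEx : ∀ i, i < k → att i → (i = i1 ∨ i = i2 ∨ i = i3)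
  · -- exactly three attachments; run the three pairs
    have hattF : ∀ i, i < k → (att i ↔ (i = i1 ∨ i = i2 ∨ i = i3)) := by
      intro i hi
      constructor
      · exact hEx i hi
      · rintro (rfl | rfl | rfl)
        · exact hx1
        · exact hx2
        · exact hx3
    -- pair (i1, i2)
    have hP1 : G.HasInducedMinor (wheelGraph 4) ∨ i2 - i1 = 1 := by
      have hole1 := hole.rot i1 (by omega)
      have hHS : holeSet (fun i => f (rotIdx k i1 i)) k = holeSet f k := holeSet_rot i1 (by omega)
      refine pair_step hG hole1 (β := i2 - i1) (γ := i3 - i1) (by omega) (by omega) (by omega)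
        (show v ∉ holeSet (fun i => f (rotIdx k i1 i)) k by rw [hHS]; exact hv) ?_
      intro j hj
      rw [hHS]
      have hidx : rotIdx k i1 j < k := rotIdx_lt (by omega) hj
      rw [show (∃ x ∈ compS G ((holeSet f k)ᶜ) v, G.Adj (f (rotIdx k i1 j)) x) ↔
            att (rotIdx k i1 j) from Iff.rfl]
      rw [hattF _ hidx]
      unfold rotIdx
      split <;> omega
    -- pair (i2, i3)
    have hP2 : G.HasInducedMinor (wheelGraph 4) ∨ i3 - i2 = 1 := by
      have hole1 := hole.rot i2 (by omega)
      have hHS : holeSet (fun i => f (rotIdx k i2 i)) k = holeSet f k := holeSet_rot i2 (by omega)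
      refine pair_step hG hole1 (β := i3 - i2) (γ := k - i2 + i1) (by omega) (by omega) (by omega)
        (show v ∉ holeSet (fun i => f (rotIdx k i2 i)) k by rw [hHS]; exact hv) ?_
      intro j hj
      rw [hHS]
      have hidx : rotIdx k i2 j < k := rotIdx_lt (by omega) hj
      rw [show (∃ x ∈ compS G ((holeSet f k)ᶜ) v, G.Adj (f (rotIdx k i2 j)) x) ↔
            att (rotIdx k i2 j) from Iff.rfl]
      rw [hattF _ hidx]
      unfold rotIdx
      split <;> omega
    -- pair (i1, i3) via reflection
    have hP3 : G.HasInducedMinor (wheelGraph 4) ∨ k - i3 + i1 = 1 := by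
      have hole1 := hole.rot i1 (by omega)
      have hole2 := hole1.ref
      have hHS : holeSet (fun i => (fun i' => f (rotIdx k i1 i')) (refIdx k i)) k
          = holeSet f k := by
        have e1 := holeSet_ref (f := fun i' => f (rotIdx k i1 i')) (k := k) (by omega)
        rw [e1, holeSet_rot i1 (by omega)]
      refine pair_step hG hole2 (β := k - i3 + i1) (γ := k - i2 + i1) (by omega) (by omega)
        (by omega)
        (show v ∉ holeSet (fun i => (fun i' => f (rotIdx k i1 i')) (refIdx k i)) k
          by rw [hHS]; exact hv) ?_
      intro j hj
      rw [hHS]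
      have hr : refIdx k j < k := refIdx_lt (by omega) hj
      have hidx : rotIdx k i1 (refIdx k j) < k := rotIdx_lt (by omega) hr
      rw [show (∃ x ∈ compS G ((holeSet f k)ᶜ) v, G.Adj (f (rotIdx k i1 (refIdx k j))) x) ↔
            att (rotIdx k i1 (refIdx k j)) from Iff.rfl]
      rw [hattF _ hidx]
      unfold rotIdx refIdx
      split <;> split <;> omega
    rcases hP1 with h | hg1
    · exact h
    rcases hP2 with h | hg2
    · exact h
    rcases hP3 with h | hg3
    · exact h
    exfalso
    omega
  · -- at least four attachments: recipe 1 directly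
    push_neg at hEx
    obtain ⟨j, hjk, hjatt, hjne⟩ := hEx
    have hquad : ∃ j1 j2 j3 j4, j1 < j2 ∧ j2 < j3 ∧ j3 < j4 ∧ j4 < k ∧
        att j1 ∧ att j2 ∧ att j3 ∧ att j4 := by
      rcases Nat.lt_trichotomy j i1 with h | h | h
      · exact ⟨j, i1, i2, i3, h, h12, h23, h3k, hjatt, hx1, hx2, hx3⟩
      · exact (hjne.1 h).elim
      · rcases Nat.lt_trichotomy j i2 with g | g | g
        · exact ⟨i1, j, i2, i3, h, g, h23, h3k, hx1, hjatt, hx2, hx3⟩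
        · exact (hjne.2.1 g).elim
        · rcases Nat.lt_trichotomy j i3 with e | e | e
          · exact ⟨i1, i2, j, i3, h12, g, e, h3k, hx1, hx2, hjatt, hx3⟩
          · exact (hjne.2.2 e).elim
          · exact ⟨i1, i2, i3, j, h12, h23, e, hjk, hx1, hx2, hx3, hjatt⟩
    obtain ⟨j1, j2, j3, j4, g12, g23, g34, g4k, ha1, ha2, ha3, ha4⟩ := hquad
    have hole1 := hole.rot j1 (by omega)
    have hHS : holeSet (fun i => f (rotIdx k j1 i)) k = holeSet f k := holeSet_rot j1 (by omega)
    have hval : ∀ t, t < k → rotIdx k j1 (t - j1) = t ∨ (t < j1) := by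
      intro t ht
      by_cases h : j1 ≤ t
      · left
        unfold rotIdx
        split <;> omega
      · right
        omega
    refine recipe1 hole1 K v (mem_compS_self hvS) (fun y hy => conn_compS hy) ?_
      (j2 - j1) (j3 - j1) (j4 - j1) (by omega) (by omega) (by omega) (by omega) ?_ ?_ ?_ ?_
    · intro i hik hiK
      have : f (rotIdx k j1 i) ∈ holeSet f k := mem_holeSet (rotIdx_lt (by omega) hik)
      exact (compS_subset hiK) this
    · obtain ⟨x, hxK, hadj⟩ := ha1
      refine ⟨x, hxK, ?_⟩
      have h0 : rotIdx k j1 0 = j1 := by unfold rotIdx; split <;> omega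
      show G.Adj (f (rotIdx k j1 0)) x
      rw [h0]
      exact hadj
    · obtain ⟨x, hxK, hadj⟩ := ha2
      refine ⟨x, hxK, ?_⟩
      have h0 : rotIdx k j1 (j2 - j1) = j2 := by unfold rotIdx; split <;> omega
      show G.Adj (f (rotIdx k j1 (j2 - j1))) x
      rw [h0]
      exact hadj
    · obtain ⟨x, hxK, hadj⟩ := ha3
      refine ⟨x, hxK, ?_⟩
      have h0 : rotIdx k j1 (j3 - j1) = j3 := by unfold rotIdx; split <;> omega
      show G.Adj (f (rotIdx k j1 (j3 - j1))) x
      rw [h0]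
      exact hadj
    · obtain ⟨x, hxK, hadj⟩ := ha4
      refine ⟨x, hxK, ?_⟩
      have h0 : rotIdx k j1 (j4 - j1) = j4 := by unfold rotIdx; split <;> omega
      show G.Adj (f (rotIdx k j1 (j4 - j1))) x
      rw [h0]
      exact hadj

/-- A "necklace": a closed chain visiting the four sets `A 0, A 1, A 2, A 3`
in four consecutive blocks. -/
def Neck (G : SimpleGraph V) (A : ℕ → Set V) (m b1 b2 b3 : ℕ) (c : ℕ → V) : Prop :=
  0 < b1 ∧ b1 < b2 ∧ b2 < b3 ∧ b3 < m ∧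
  (∀ i, i < b1 → c i ∈ A 0) ∧
  (∀ i, b1 ≤ i → i < b2 → c i ∈ A 1) ∧
  (∀ i, b2 ≤ i → i < b3 → c i ∈ A 2) ∧
  (∀ i, b3 ≤ i → i < m → c i ∈ A 3) ∧
  (∀ i, i + 1 < m → G.Adj (c i) (c (i+1))) ∧
  G.Adj (c (m-1)) (c 0)

lemma neck_cut_eq {A : ℕ → Set V} {m b1 b2 b3 i j : ℕ} {c : ℕ → V}
    (hn : Neck G A m b1 b2 b3 c) (hij : i < j) (hjm : j < m)
    (hb1 : ¬ (i < b1 ∧ b1 ≤ j)) (hb2 : ¬ (i < b2 ∧ b2 ≤ j)) (hb3 : ¬ (i < b3 ∧ b3 ≤ j))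
    (heq : c i = c j) :
    Neck G A (m - (j - i))
      (if b1 ≤ i then b1 else b1 - (j - i))
      (if b2 ≤ i then b2 else b2 - (j - i))
      (if b3 ≤ i then b3 else b3 - (j - i))
      (fun s => if s ≤ i then c s else c (s + (j - i))) := by
  obtain ⟨g1, g2, g3, g4, m0, m1, m2, m3, hch, hcy⟩ := hn
  have hd : 0 < j - i := by omega
  refine ⟨?_, ?_, ?_, ?_, ?_, ?_, ?_, ?_, ?_, ?_⟩
  · split <;> omega
  · split <;> split <;> omega
  · split <;> split <;> omega
  · split <;> omega
  · intro s hs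
    split at hs
    · by_cases h : s ≤ i
      · simp only [if_pos h]
        exact m0 s (by omega)
      · simp only [if_neg h]
        exact m0 (s + (j - i)) (by omega)
    · by_cases h : s ≤ i
      · simp only [if_pos h]
        exact m0 s (by omega)
      · simp only [if_neg h]
        exact m0 (s + (j - i)) (by omega)
  · intro s hs1 hs2
    split at hs1 <;> split at hs2 <;>
    · by_cases h : s ≤ i
      · simp only [if_pos h]
        exact m1 s (by omega) (by omega)
      · simp only [if_neg h]
        exact m1 (s + (j - i)) (by omega) (by omega)
  · intro s hs1 hs2
    split at hs1 <;> split at hs2 <;>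
    · by_cases h : s ≤ i
      · simp only [if_pos h]
        exact m2 s (by omega) (by omega)
      · simp only [if_neg h]
        exact m2 (s + (j - i)) (by omega) (by omega)
  · intro s hs1 hs2
    split at hs1 <;>
    · by_cases h : s ≤ i
      · simp only [if_pos h]
        exact m3 s (by omega) (by omega)
      · simp only [if_neg h]
        exact m3 (s + (j - i)) (by omega) (by omega)
  · intro s hs
    rcases lt_trichotomy s i with h | h | h
    · simp only [if_pos (by omega : s ≤ i), if_pos (by omega : s + 1 ≤ i)]
      exact hch s (by omega)
    · subst h
      simp only [if_pos (le_refl s), if_neg (by omega : ¬ (s + 1 ≤ s))]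
      rw [show s + 1 + (j - s) = j + 1 by omega, heq]
      exact hch j (by omega)
    · simp only [if_neg (by omega : ¬ (s ≤ i)), if_neg (by omega : ¬ (s + 1 ≤ i))]
      rw [show s + 1 + (j - i) = (s + (j - i)) + 1 by omega]
      exact hch (s + (j - i)) (by omega)
  · by_cases h : m - (j - i) - 1 ≤ i
    · have hji : j = m - 1 := by omega
      have hmi : m - (j - i) - 1 = i := by omega
      simp only [hmi, if_pos (le_refl i), if_pos (by omega : 0 ≤ i)]
      rw [heq, hji]
      exact hcy
    · simp only [if_neg h, if_pos (by omega : 0 ≤ i)]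
      rw [show m - (j - i) - 1 + (j - i) = m - 1 by omega]
      exact hcy

lemma neck_cut_adj {A : ℕ → Set V} {m b1 b2 b3 i j : ℕ} {c : ℕ → V}
    (hn : Neck G A m b1 b2 b3 c) (hij : i + 2 ≤ j) (hjm : j < m)
    (hone12 : ¬ (i < b1 ∧ b2 ≤ j)) (hone23 : ¬ (i < b2 ∧ b3 ≤ j))
    (hadj : G.Adj (c i) (c j)) :
    Neck G A (m - (j - i - 1))
      (if b1 ≤ i then b1 else if b1 ≤ j then i + 1 else b1 - (j - i - 1))
      (if b2 ≤ i then b2 else if b2 ≤ j then i + 1 else b2 - (j - i - 1))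
      (if b3 ≤ i then b3 else if b3 ≤ j then i + 1 else b3 - (j - i - 1))
      (fun s => if s ≤ i then c s else c (s + (j - i - 1))) := by
  obtain ⟨g1, g2, g3, g4, m0, m1, m2, m3, hch, hcy⟩ := hn
  have hd : 0 < j - i - 1 := by omega
  refine ⟨?_, ?_, ?_, ?_, ?_, ?_, ?_, ?_, ?_, ?_⟩
  · split_ifs <;> omega
  · split_ifs <;> omega
  · split_ifs <;> omega
  · split_ifs <;> omega
  · intro s hs
    have hs' : (s ≤ i → s < b1) ∧ (¬ (s ≤ i) → s + (j - i - 1) < b1) := by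
      constructor
      · intro h
        split at hs
        · omega
        · split at hs <;> omega
      · intro h
        split at hs
        · omega
        · split at hs <;> omega
    by_cases h : s ≤ i
    · simp only [if_pos h]
      exact m0 s (hs'.1 h)
    · simp only [if_neg h]
      exact m0 (s + (j - i - 1)) (hs'.2 h)
  · intro s hs1 hs2
    by_cases h : s ≤ i
    · simp only [if_pos h]
      refine m1 s ?_ ?_
      · split at hs1
        · omega
        · split at hs1 <;> omega
      · split at hs2
        · omega
        · split at hs2 <;> omega
    · simp only [if_neg h]
      refine m1 (s + (j - i - 1)) ?_ ?_
      · split at hs1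
        · omega
        · split at hs1 <;> omega
      · split at hs2
        · omega
        · split at hs2 <;> omega
  · intro s hs1 hs2
    by_cases h : s ≤ i
    · simp only [if_pos h]
      refine m2 s ?_ ?_
      · split at hs1
        · omega
        · split at hs1 <;> omega
      · split at hs2
        · omega
        · split at hs2 <;> omega
    · simp only [if_neg h]
      refine m2 (s + (j - i - 1)) ?_ ?_
      · split at hs1
        · omega
        · split at hs1 <;> omega
      · split at hs2
        · omega
        · split at hs2 <;> omega
  · intro s hs1 hs2
    by_cases h : s ≤ i
    · simp only [if_pos h]
      refine m3 s ?_ (by omega)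
      split at hs1
      · omega
      · split at hs1 <;> omega
    · simp only [if_neg h]
      refine m3 (s + (j - i - 1)) ?_ (by omega)
      split at hs1
      · omega
      · split at hs1 <;> omega
  · intro s hs
    rcases lt_trichotomy s i with h | h | h
    · simp only [if_pos (by omega : s ≤ i), if_pos (by omega : s + 1 ≤ i)]
      exact hch s (by omega)
    · subst h
      simp only [if_pos (le_refl s), if_neg (by omega : ¬ (s + 1 ≤ s))]
      rw [show s + 1 + (j - s - 1) = j by omega]
      exact hadj
    · simp only [if_neg (by omega : ¬ (s ≤ i)), if_neg (by omega : ¬ (s + 1 ≤ i))]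
      rw [show s + 1 + (j - i - 1) = (s + (j - i - 1)) + 1 by omega]
      exact hch (s + (j - i - 1)) (by omega)
  · have h : ¬ (m - (j - i - 1) - 1 ≤ i) := by omega
    simp only [if_neg h, if_pos (by omega : 0 ≤ i)]
    rw [show m - (j - i - 1) - 1 + (j - i - 1) = m - 1 by omega]
    exact hcy

lemma neck_cut_03 {A : ℕ → Set V} {m b1 b2 b3 i j : ℕ} {c : ℕ → V}
    (hn : Neck G A m b1 b2 b3 c) (hij : i < j) (hjm : j < m)
    (hb1 : i < b1) (hb3 : b3 ≤ j) (hadj : G.Adj (c i) (c j)) :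
    Neck G A (j - i + 1) (b1 - i) (b2 - i) (b3 - i) (fun s => c (i + s)) := by
  obtain ⟨g1, g2, g3, g4, m0, m1, m2, m3, hch, hcy⟩ := hn
  refine ⟨by omega, by omega, by omega, by omega, ?_, ?_, ?_, ?_, ?_, ?_⟩
  · intro s hs
    exact m0 (i + s) (by omega)
  · intro s hs1 hs2
    exact m1 (i + s) (by omega) (by omega)
  · intro s hs1 hs2
    exact m2 (i + s) (by omega) (by omega)
  · intro s hs1 hs2
    exact m3 (i + s) (by omega) (by omega)
  · intro s hs
    show G.Adj (c (i + s)) (c (i + (s + 1)))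
    rw [show i + (s + 1) = (i + s) + 1 by omega]
    exact hch (i + s) (by omega)
  · show G.Adj (c (i + (j - i + 1 - 1))) (c (i + 0))
    rw [show i + (j - i + 1 - 1) = j by omega, show i + 0 = i by omega]
    exact hadj.symm

lemma neck_to_hole {A : ℕ → Set V}
    (hdisj : ∀ s t, s < 4 → t < 4 → s ≠ t → ∀ w, w ∈ A s → w ∈ A t → False)
    (hno02 : ∀ u ∈ A 0, ∀ w ∈ A 2, ¬ G.Adj u w)
    (hno13 : ∀ u ∈ A 1, ∀ w ∈ A 3, ¬ G.Adj u w)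
    (hex : ∃ m, ∃ b1, ∃ b2, ∃ b3, ∃ c, Neck G A m b1 b2 b3 c) :
    ∃ k f, IsHole G k f := by
  classical
  obtain ⟨m, ⟨b1, b2, b3, c, hN⟩, hmin⟩ : ∃ m, (∃ b1, ∃ b2, ∃ b3, ∃ c, Neck G A m b1 b2 b3 c) ∧
      ∀ m', m' < m → ¬ (∃ b1, ∃ b2, ∃ b3, ∃ c, Neck G A m' b1 b2 b3 c) :=
    ⟨Nat.find hex, Nat.find_spec hex, fun m' hm' => Nat.find_min hex hm'⟩
  obtain ⟨g1, g2, g3, g4, m0, m1, m2, m3, hch, hcy⟩ := id hN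
  -- the block of an index
  have hblk : ∀ i, i < m → ∃ t, t < 4 ∧ c i ∈ A t ∧
      (t = 0 ↔ i < b1) ∧ (t = 1 ↔ (b1 ≤ i ∧ i < b2)) ∧
      (t = 2 ↔ (b2 ≤ i ∧ i < b3)) ∧ (t = 3 ↔ b3 ≤ i) := by
    intro i hi
    rcases Nat.lt_or_ge i b1 with h | h
    · exact ⟨0, by omega, m0 i h, by omega, by omega, by omega, by omega⟩
    · rcases Nat.lt_or_ge i b2 with h' | h'
      · exact ⟨1, by omega, m1 i h h', by omega, by omega, by omega, by omega⟩
      · rcases Nat.lt_or_ge i b3 with h'' | h''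
        · exact ⟨2, by omega, m2 i h' h'', by omega, by omega, by omega, by omega⟩
        · exact ⟨3, by omega, m3 i h'' hi, by omega, by omega, by omega, by omega⟩
  have noeq : ∀ i j, i < j → j < m → c i ≠ c j := by
    intro i j hij hjm heq
    obtain ⟨ti, hti4, hmi, hi0, hi1, hi2, hi3⟩ := hblk i (by omega)
    obtain ⟨tj, htj4, hmj, hj0, hj1, hj2, hj3⟩ := hblk j hjm
    have htij : ti = tj := by
      by_contra hne
      exact hdisj ti tj hti4 htj4 hne (c i) hmi (heq ▸ hmj)
    refine hmin (m - (j - i)) (by omega) ⟨_, _, _, _, neck_cut_eq hN hij hjm ?_ ?_ ?_ heq⟩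
    · omega
    · omega
    · omega
  have nochord : ∀ i j, i < j → j < m → G.Adj (c i) (c j) →
      (j = i + 1 ∨ (i = 0 ∧ j = m - 1)) := by
    intro i j hij hjm hadj
    by_contra hcon
    push_neg at hcon
    obtain ⟨hc1, hc2⟩ := hcon
    have hij2 : i + 2 ≤ j := by omega
    have hnotlast : ¬ (i = 0 ∧ j = m - 1) := by
      intro ⟨h1, h2⟩
      exact hc2 h1 h2
    obtain ⟨ti, hti4, hmi, hi0, hi1, hi2, hi3⟩ := hblk i (by omega)
    obtain ⟨tj, htj4, hmj, hj0, hj1, hj2, hj3⟩ := hblk j hjm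
    -- case 0-2 and 1-3 : impossible
    by_cases h02 : ti = 0 ∧ tj = 2
    · exact hno02 (c i) (h02.1 ▸ hmi) (c j) (h02.2 ▸ hmj) hadj
    by_cases h13 : ti = 1 ∧ tj = 3
    · exact hno13 (c i) (h13.1 ▸ hmi) (c j) (h13.2 ▸ hmj) hadj
    by_cases h03 : ti = 0 ∧ tj = 3
    · -- keep the middle segment
      refine hmin (j - i + 1) (by omega) ⟨_, _, _, _, neck_cut_03 hN hij hjm ?_ ?_ hadj⟩
      · omega
      · omega
    · -- adjacent or equal blocks: cut the middle
      have hmono : ti ≤ tj := by omega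
      have htj1 : tj ≤ ti + 1 := by omega
      refine hmin (m - (j - i - 1)) (by omega) ⟨_, _, _, _, neck_cut_adj hN hij2 hjm ?_ ?_ hadj⟩
      · omega
      · omega
  refine ⟨m, c, ⟨by omega, ?_, ?_⟩⟩
  · intro i hi j hj heq
    rcases lt_trichotomy i j with h | h | h
    · exact absurd heq (noeq i j h hj)
    · exact h
    · exact absurd heq.symm (noeq j i h hi)
  · have main : ∀ i j, i < j → j < m → (G.Adj (c i) (c j) ↔ CyAdj m i j) := by
      intro i j hij hjm
      constructor
      · intro hadj
        rcases nochord i j hij hjm hadj with h | ⟨h1, h2⟩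
        · unfold CyAdj; omega
        · unfold CyAdj; omega
      · intro hcy
        unfold CyAdj at hcy
        rcases hcy with h | h | ⟨h1, h2⟩ | ⟨h1, h2⟩
        · subst h
          exact hch i hjm
        · omega
        · subst h1
          have : j = m - 1 := by omega
          subst this
          exact hcy.symm
        · omega
    intro i hi j hj
    rcases lt_trichotomy i j with h | h | h
    · exact main i j h hj
    · subst h
      constructor
      · intro hadj
        exact absurd hadj (G.irrefl)
      · intro hcy
        unfold CyAdj at hcy
        omega
    · rw [G.adj_comm, cyadj_comm]
      exact main j i h hi

lemma easy_direction (hch : G.IsChordal) : ¬ G.HasInducedMinor (wheelGraph 4) := by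
  rintro ⟨X, hconn, hdisj, hiff⟩
  classical
  set A : ℕ → Set V := fun t => if t = 1 then X (some 1) else if t = 2 then X (some 2)
    else if t = 3 then X (some 3) else X (some 0) with hA
  have hA0 : A 0 = X (some 0) := by norm_num [hA]
  have hA1 : A 1 = X (some 1) := by norm_num [hA]
  have hA2 : A 2 = X (some 2) := by norm_num [hA]
  have hA3 : A 3 = X (some 3) := by norm_num [hA]
  have hd : ∀ (u v : Fin 4), u ≠ v → ∀ w, w ∈ X (some u) → w ∈ X (some v) → False := by
    intro u v huv w h1 h2
    exact Set.disjoint_left.mp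
      (hdisj (show some u ≠ some v from fun h => huv (Option.some_injective _ h))) h1 h2
  have hdisj' : ∀ s t, s < 4 → t < 4 → s ≠ t → ∀ w, w ∈ A s → w ∈ A t → False := by
    intro s t hs ht hst w hws hwt
    interval_cases s <;> interval_cases t <;>
      simp only [hA0, hA1, hA2, hA3] at hws hwt <;>
      first
        | omega
        | exact hd _ _ (by decide) w hws hwt
  have hno02 : ∀ u ∈ A 0, ∀ w ∈ A 2, ¬ G.Adj u w := by
    intro u hu w hw hadj
    rw [hA0] at hu
    rw [hA2] at hw
    have := (hiff (some 0) (some 2) (by decide)).2 ⟨u, hu, w, hw, hadj⟩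
    exact absurd this (by unfold wheelGraph; rw [fromRel_adj]; decide)
  have hno13 : ∀ u ∈ A 1, ∀ w ∈ A 3, ¬ G.Adj u w := by
    intro u hu w hw hadj
    rw [hA1] at hu
    rw [hA3] at hw
    have := (hiff (some 1) (some 3) (by decide)).2 ⟨u, hu, w, hw, hadj⟩
    exact absurd this (by unfold wheelGraph; rw [fromRel_adj]; decide)
  have e01 : ∃ v1 ∈ X (some 0), ∃ v2 ∈ X (some 1), G.Adj v1 v2 :=
    (hiff (some 0) (some 1) (by decide)).1 (by unfold wheelGraph; rw [fromRel_adj]; decide)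
  have e12 : ∃ v1 ∈ X (some 1), ∃ v2 ∈ X (some 2), G.Adj v1 v2 :=
    (hiff (some 1) (some 2) (by decide)).1 (by unfold wheelGraph; rw [fromRel_adj]; decide)
  have e23 : ∃ v1 ∈ X (some 2), ∃ v2 ∈ X (some 3), G.Adj v1 v2 :=
    (hiff (some 2) (some 3) (by decide)).1 (by unfold wheelGraph; rw [fromRel_adj]; decide)
  have e30 : ∃ v1 ∈ X (some 3), ∃ v2 ∈ X (some 0), G.Adj v1 v2 :=
    (hiff (some 3) (some 0) (by decide)).1 (by unfold wheelGraph; rw [fromRel_adj]; decide)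
  obtain ⟨q0, hq0, a1, ha1, hE01⟩ := e01
  obtain ⟨q1, hq1, a2, ha2, hE12⟩ := e12
  obtain ⟨q2, hq2, a3, ha3, hE23⟩ := e23
  obtain ⟨q3, hq3, a0, ha0, hE30⟩ := e30
  obtain ⟨n0, p0, hp00, hp0n, hp0mem, hp0adj⟩ : Conn G (X (some 0)) a0 q0 :=
    conn_of_reachable_induce ha0 hq0 ((hconn (some 0)).preconnected _ _)
  obtain ⟨n1, p1, hp10, hp1n, hp1mem, hp1adj⟩ : Conn G (X (some 1)) a1 q1 :=
    conn_of_reachable_induce ha1 hq1 ((hconn (some 1)).preconnected _ _)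
  obtain ⟨n2, p2, hp20, hp2n, hp2mem, hp2adj⟩ : Conn G (X (some 2)) a2 q2 :=
    conn_of_reachable_induce ha2 hq2 ((hconn (some 2)).preconnected _ _)
  obtain ⟨n3, p3, hp30, hp3n, hp3mem, hp3adj⟩ : Conn G (X (some 3)) a3 q3 :=
    conn_of_reachable_induce ha3 hq3 ((hconn (some 3)).preconnected _ _)
  set o1 := n0 + 1 with ho1
  set o2 := n0 + n1 + 2 with ho2
  set o3 := n0 + n1 + n2 + 3 with ho3
  set m := n0 + n1 + n2 + n3 + 4 with hm
  set N : ℕ → V := fun i => if i < o1 then p0 i else if i < o2 then p1 (i - o1)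
    else if i < o3 then p2 (i - o2) else p3 (i - o3) with hNdef
  have hneck : Neck G A m o1 o2 o3 N := by
    refine ⟨by omega, by omega, by omega, by omega, ?_, ?_, ?_, ?_, ?_, ?_⟩
    · intro i hi
      rw [hA0]
      simp only [hNdef, if_pos (show i < o1 by omega)]
      exact hp0mem i (by omega)
    · intro i hi1 hi2
      rw [hA1]
      simp only [hNdef, if_neg (show ¬ i < o1 by omega), if_pos (show i < o2 by omega)]
      exact hp1mem (i - o1) (by omega)
    · intro i hi1 hi2
      rw [hA2]
      simp only [hNdef, if_neg (show ¬ i < o1 by omega), if_neg (show ¬ i < o2 by omega),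
        if_pos (show i < o3 by omega)]
      exact hp2mem (i - o2) (by omega)
    · intro i hi1 hi2
      rw [hA3]
      simp only [hNdef, if_neg (show ¬ i < o1 by omega), if_neg (show ¬ i < o2 by omega),
        if_neg (show ¬ i < o3 by omega)]
      exact hp3mem (i - o3) (by omega)
    · intro i hi
      by_cases hA' : i + 1 < o1
      · simp only [hNdef, if_pos (show i < o1 by omega), if_pos hA']
        exact hp0adj i (by omega)
      by_cases hB : i + 1 = o1
      · simp only [hNdef, if_pos (show i < o1 by omega), if_neg (show ¬ i + 1 < o1 by omega),
          if_pos (show i + 1 < o2 by omega)]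
        rw [show i = n0 by omega, show n0 + 1 - o1 = 0 by omega, hp0n, hp10]
        exact hE01
      by_cases hC : i + 1 < o2
      · simp only [hNdef, if_neg (show ¬ i < o1 by omega), if_pos (show i < o2 by omega),
          if_neg (show ¬ i + 1 < o1 by omega), if_pos hC]
        rw [show i + 1 - o1 = (i - o1) + 1 by omega]
        exact hp1adj (i - o1) (by omega)
      by_cases hD : i + 1 = o2
      · simp only [hNdef, if_neg (show ¬ i < o1 by omega), if_pos (show i < o2 by omega),
          if_neg (show ¬ i + 1 < o1 by omega), if_neg (show ¬ i + 1 < o2 by omega),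
          if_pos (show i + 1 < o3 by omega)]
        rw [show i - o1 = n1 by omega, show i + 1 - o2 = 0 by omega, hp1n, hp20]
        exact hE12
      by_cases hE : i + 1 < o3
      · simp only [hNdef, if_neg (show ¬ i < o1 by omega), if_neg (show ¬ i < o2 by omega),
          if_pos (show i < o3 by omega), if_neg (show ¬ i + 1 < o1 by omega),
          if_neg (show ¬ i + 1 < o2 by omega), if_pos hE]
        rw [show i + 1 - o2 = (i - o2) + 1 by omega]
        exact hp2adj (i - o2) (by omega)
      by_cases hF : i + 1 = o3
      · simp only [hNdef, if_neg (show ¬ i < o1 by omega), if_neg (show ¬ i < o2 by omega),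
          if_pos (show i < o3 by omega), if_neg (show ¬ i + 1 < o1 by omega),
          if_neg (show ¬ i + 1 < o2 by omega), if_neg (show ¬ i + 1 < o3 by omega)]
        rw [show i - o2 = n2 by omega, show i + 1 - o3 = 0 by omega, hp2n, hp30]
        exact hE23
      · simp only [hNdef, if_neg (show ¬ i < o1 by omega), if_neg (show ¬ i < o2 by omega),
          if_neg (show ¬ i < o3 by omega), if_neg (show ¬ i + 1 < o1 by omega),
          if_neg (show ¬ i + 1 < o2 by omega), if_neg (show ¬ i + 1 < o3 by omega)]
        rw [show i + 1 - o3 = (i - o3) + 1 by omega]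
        exact hp3adj (i - o3) (by omega)
    · simp only [hNdef, if_neg (show ¬ m - 1 < o1 by omega), if_neg (show ¬ m - 1 < o2 by omega),
        if_neg (show ¬ m - 1 < o3 by omega), if_pos (show 0 < o1 by omega)]
      rw [show m - 1 - o3 = n3 by omega, hp3n, hp00]
      exact hE30
  obtain ⟨k, f, hole⟩ := neck_to_hole hdisj' hno02 hno13 ⟨m, o1, o2, o3, N, hneck⟩
  exact not_chordal_of_isHole hole hch

end W4Aux


/-- A `3`-connected graph is `W₄`-induced-minor-free iff it is
chordal. -/
theorem threeConnected_w4_inducedMinorFree_iff_isChordal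
    {V : Type} [Fintype V] (G : SimpleGraph V) (hG : G.IsKConnected 3) :
    ¬ G.HasInducedMinor (wheelGraph 4) ↔ G.IsChordal := by
  constructor
  · intro h
    by_contra hnc
    exact h (W4Aux.hard_direction hG hnc)
  · intro hch
    exact W4Aux.easy_direction hch
end

section
/- For every integer n ≥ 4, if G is the graph obtained from the complete graph K_n by subdividing every edge exactly once (replacing each edge by a path of length two through a new vertex), then the tree-independence number of G is at least ⌊n/2⌋. -/
open SimpleGraph

/-! ## Common definitions -/

variable {V : Type} {W : Type}

/-- The graph obtained from the complete graph `K_n` by subdividing every edge exactly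
once: branch vertices are the elements of `Fin n`, subdivision vertices are the
(non-diagonal) unordered pairs, and `i` is adjacent to `e` iff `i ∈ e`. -/
def subdividedComplete (n : ℕ) :
    SimpleGraph (Fin n ⊕ {e : Sym2 (Fin n) // ¬ e.IsDiag}) :=
  SimpleGraph.fromRel (fun a b =>
    ∃ (i : Fin n) (e : {e : Sym2 (Fin n) // ¬ e.IsDiag}),
      a = Sum.inl i ∧ b = Sum.inr e ∧ i ∈ e.1)


/-! ## Auxiliary lemmas for the proof -/

section TreeLemmas

variable {ι : Type} {T : SimpleGraph ι}

lemma reachable_induce_of_walk {S : Set ι} : ∀ {u v : ι} (w : T.Walk u v),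
    (∀ x ∈ w.support, x ∈ S) → ∀ (hu : u ∈ S) (hv : v ∈ S),
    (T.induce S).Reachable ⟨u, hu⟩ ⟨v, hv⟩ := by
  intro u v w
  induction w with
  | nil => intro _ hu hv; rfl
  | @cons a b c h p ih =>
    intro hw ha hc
    have hb : b ∈ S := hw b (by simp [Walk.support_cons])
    have hadj : (T.induce S).Adj ⟨a, ha⟩ ⟨b, hb⟩ := h
    exact hadj.reachable.trans (ih (fun x hx => hw x (by simp [Walk.support_cons, hx])) hb hc)

lemma path_support_subset (hT : T.IsTree) {S : Set ι} (hS : (T.induce S).Connected)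
    {u v : ι} (hu : u ∈ S) (hv : v ∈ S) (p : T.Walk u v) (hp : p.IsPath) :
    ∀ x ∈ p.support, x ∈ S := by
  classical
  obtain ⟨w'⟩ := hS ⟨u, hu⟩ ⟨v, hv⟩
  set w : T.Walk u v := w'.map (SimpleGraph.Embedding.induce S).toHom with hw
  have hsupp : ∀ x ∈ w.support, x ∈ S := by
    intro x hx
    replace hx : x ∈ (w'.map (SimpleGraph.Embedding.induce S).toHom).support := hx
    rw [Walk.support_map, List.mem_map] at hx
    obtain ⟨y, _, rfl⟩ := hx
    exact y.2
  have hb := (hT.existsUnique_path u v).unique hp w.bypass_isPath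
  intro x hx
  rw [hb] at hx
  exact hsupp x (w.support_bypass_subset hx)

lemma crossing {P Q : Set ι} : ∀ {a c : ι} (w : T.Walk a c),
    a ∈ P → c ∈ Q → (∀ x ∈ w.support, x ∈ P ∪ Q) →
    (∃ x ∈ w.support, x ∈ P ∩ Q) ∨
      (∃ x ∈ w.support, ∃ y ∈ w.support, T.Adj x y ∧ x ∈ P ∧ x ∉ Q ∧ y ∈ Q ∧ y ∉ P) := by
  intro a c w
  induction w with
  | nil => intro ha hc _; exact Or.inl ⟨_, by simp, ha, hc⟩
  | @cons a b c h p ih =>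
    intro ha hc hw
    by_cases haQ : a ∈ Q
    · exact Or.inl ⟨a, by simp, ha, haQ⟩
    by_cases hbP : b ∈ P
    · rcases ih hbP hc (fun x hx => hw x (by simp [Walk.support_cons, hx])) with
        ⟨x, hx, hx'⟩ | ⟨x, hx, y, hy, h'⟩
      · exact Or.inl ⟨x, by simp [Walk.support_cons, hx], hx'⟩
      · exact Or.inr ⟨x, by simp [Walk.support_cons, hx], y, by simp [Walk.support_cons, hy], h'⟩
    · have hbQ : b ∈ Q := by
        rcases hw b (by simp [Walk.support_cons]) with h' | h'
        · exact absurd h' hbP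
        · exact h'
      exact Or.inr ⟨a, by simp, b, by simp [Walk.support_cons], h, ha, haQ, hbQ, hbP⟩

lemma three_sets (hT : T.IsTree) {C1 C2 C3 : Set ι}
    (h1 : (T.induce C1).Connected) (h2 : (T.induce C2).Connected)
    (h3 : (T.induce C3).Connected)
    (h12 : (C1 ∩ C2).Nonempty) (h13 : (C1 ∩ C3).Nonempty) (h23 : (C2 ∩ C3).Nonempty) :
    (C1 ∩ C2 ∩ C3).Nonempty := by
  classical
  obtain ⟨a, ha1, ha2⟩ := h12
  obtain ⟨b, hb1, hb3⟩ := h13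
  obtain ⟨c, hc2, hc3⟩ := h23
  obtain ⟨p, hp, hpu⟩ := hT.existsUnique_path a c
  have hpC2 : ∀ x ∈ p.support, x ∈ C2 := path_support_subset hT h2 ha2 hc2 p hp
  -- support p ⊆ C1 ∪ C3
  obtain ⟨q1, hq1, _⟩ := hT.existsUnique_path a b
  obtain ⟨q2, hq2, _⟩ := hT.existsUnique_path b c
  have hq1C : ∀ x ∈ q1.support, x ∈ C1 := path_support_subset hT h1 ha1 hb1 q1 hq1
  have hq2C : ∀ x ∈ q2.support, x ∈ C3 := path_support_subset hT h3 hb3 hc3 q2 hq2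
  have hpu' := hpu (q1.append q2).bypass (q1.append q2).bypass_isPath
  have hp13 : ∀ x ∈ p.support, x ∈ C1 ∪ C3 := by
    intro x hx
    rw [← hpu'] at hx
    have := (q1.append q2).support_bypass_subset hx
    rcases (Walk.mem_support_append_iff _ _).mp this with h' | h'
    · exact Or.inl (hq1C x h')
    · exact Or.inr (hq2C x h')
  rcases crossing p ha1 hc3 hp13 with ⟨x, hx, hx1, hx3⟩ | ⟨x, hx, y, hy, hadj, hx1, hx3, hy3, hy1⟩
  · exact ⟨x, ⟨hx1, hpC2 x hx⟩, hx3⟩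
  · exfalso
    obtain ⟨q, hq, hqu⟩ := hT.existsUnique_path x b
    have hqC1 : ∀ z ∈ q.support, z ∈ C1 := path_support_subset hT h1 hx1 hb1 q hq
    have hyq : y ∉ q.support := fun h' => hy1 (hqC1 y h')
    have hcons : (Walk.cons hadj.symm q).IsPath := hq.cons hyq
    have : ∀ z ∈ (Walk.cons hadj.symm q).support, z ∈ C3 :=
      path_support_subset hT h3 hy3 hb3 _ hcons
    exact hx3 (this x (by simp [Walk.support_cons, q.start_mem_support]))

lemma inter_connected (hT : T.IsTree) {C1 C2 : Set ι}
    (h1 : (T.induce C1).Connected) (h2 : (T.induce C2).Connected)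
    (h12 : (C1 ∩ C2).Nonempty) : (T.induce (C1 ∩ C2)).Connected := by
  obtain ⟨x, hx⟩ := h12
  haveI : Nonempty ↑(C1 ∩ C2) := ⟨⟨x, hx⟩⟩
  refine ⟨fun u v => ?_⟩
  obtain ⟨p, hp, _⟩ := hT.existsUnique_path (u : ι) (v : ι)
  have hC1 := path_support_subset hT h1 u.2.1 v.2.1 p hp
  have hC2 := path_support_subset hT h2 u.2.2 v.2.2 p hp
  have := reachable_induce_of_walk (S := C1 ∩ C2) p
    (fun z hz => ⟨hC1 z hz, hC2 z hz⟩) ⟨u.2.1, u.2.2⟩ ⟨v.2.1, v.2.2⟩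
  exact this

lemma helly (hT : T.IsTree) : ∀ (k : ℕ) (C : Fin (k + 1) → Set ι),
    (∀ i, (T.induce (C i)).Connected) → (∀ i j, (C i ∩ C j).Nonempty) →
    (⋂ i, C i).Nonempty := by
  intro k
  induction k with
  | zero =>
    intro C hc hp
    obtain ⟨x, hx, _⟩ := hp 0 0
    refine ⟨x, Set.mem_iInter.mpr fun i => ?_⟩
    rwa [show i = 0 from Fin.ext (Nat.lt_one_iff.mp i.2)]
  | succ k ih =>
    intro C hc hp
    set D : Fin (k + 1) → Set ι := fun i => C i.castSucc ∩ C (Fin.last (k + 1)) with hD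
    have hDc : ∀ i, (T.induce (D i)).Connected := fun i =>
      inter_connected hT (hc _) (hc _) (hp _ _)
    have hDp : ∀ i j, (D i ∩ D j).Nonempty := by
      intro i j
      have h3 := three_sets hT (hc i.castSucc) (hc j.castSucc) (hc (Fin.last (k + 1)))
        (hp _ _) (hp _ _) (hp _ _)
      obtain ⟨x, ⟨hx1, hx2⟩, hx3⟩ := h3
      exact ⟨x, ⟨hx1, hx3⟩, ⟨hx2, hx3⟩⟩
    obtain ⟨x, hx⟩ := ih D hDc hDp
    rw [Set.mem_iInter] at hx
    refine ⟨x, Set.mem_iInter.mpr fun i => ?_⟩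
    induction i using Fin.lastCases with
    | last => exact (hx 0).2
    | cast j => exact (hx j).1

end TreeLemmas


section SubdividedComplete

variable {n : ℕ}

lemma sc_adj_inl_inr {i : Fin n} {e : {e : Sym2 (Fin n) // ¬ e.IsDiag}} :
    (subdividedComplete n).Adj (Sum.inl i) (Sum.inr e) ↔ i ∈ e.1 := by
  simp only [subdividedComplete, SimpleGraph.fromRel_adj]
  constructor
  · rintro ⟨-, ⟨i', e', h1, h2, h3⟩ | ⟨i', e', h1, h2, h3⟩⟩
    · cases h1; cases h2; exact h3
    · cases h1
  · intro h
    exact ⟨by simp, Or.inl ⟨i, e, rfl, rfl, h⟩⟩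

lemma sc_not_adj_inl {i j : Fin n} : ¬ (subdividedComplete n).Adj (Sum.inl i) (Sum.inl j) := by
  simp [subdividedComplete, SimpleGraph.fromRel_adj]

lemma sc_not_adj_inr {e f : {e : Sym2 (Fin n) // ¬ e.IsDiag}} :
    ¬ (subdividedComplete n).Adj (Sum.inr e) (Sum.inr f) := by
  simp [subdividedComplete, SimpleGraph.fromRel_adj]

/-- The branch set of the branch vertex `i`: `i` together with all subdivision
vertices incident to it. -/
def XsSet (n : ℕ) (i : Fin n) : Set (Fin n ⊕ {e : Sym2 (Fin n) // ¬ e.IsDiag}) :=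
  {v | v = Sum.inl i ∨ ∃ e, v = Sum.inr e ∧ i ∈ e.1}

lemma Xs_connected (i : Fin n) : ((subdividedComplete n).induce (XsSet n i)).Connected := by
  haveI : Nonempty ↑(XsSet n i) := ⟨⟨Sum.inl i, Or.inl rfl⟩⟩
  refine ⟨fun a b => ?_⟩
  have key : ∀ a : ↑(XsSet n i),
      ((subdividedComplete n).induce (XsSet n i)).Reachable a ⟨Sum.inl i, Or.inl rfl⟩ := by
    rintro ⟨v, hv | ⟨e, rfl, he⟩⟩
    · subst hv; exact Reachable.refl _
    · have hadj : ((subdividedComplete n).induce (XsSet n i)).Adj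
        ⟨Sum.inr e, Or.inr ⟨e, rfl, he⟩⟩ ⟨Sum.inl i, Or.inl rfl⟩ :=
        (sc_adj_inl_inr.mpr he).symm
      exact hadj.reachable
  exact (key a).trans (key b).symm

variable (D : (subdividedComplete n).TreeDecomp)

/-- The set of nodes of the decomposition tree whose bag meets the branch set of `i`. -/
def Cset (i : Fin n) : Set D.ι := {t | ∃ v ∈ XsSet n i, v ∈ D.bag t}

lemma bag_reach (v : Fin n ⊕ {e : Sym2 (Fin n) // ¬ e.IsDiag}) {S : Set D.ι}
    (hS : {t | v ∈ D.bag t} ⊆ S) {t1 t2 : D.ι} (h1 : v ∈ D.bag t1) (h2 : v ∈ D.bag t2) :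
    (D.tree.induce S).Reachable ⟨t1, hS h1⟩ ⟨t2, hS h2⟩ := by
  have hr := (D.bags_connected v).preconnected ⟨t1, h1⟩ ⟨t2, h2⟩
  exact hr.map (D.tree.induceHomOfLE hS).toHom

lemma walk_to_reach {i : Fin n} : ∀ {x y : ↑(XsSet n i)}
    (_ : ((subdividedComplete n).induce (XsSet n i)).Walk x y) {t1 t2 : D.ι}
    (h1 : ↑x ∈ D.bag t1) (h2 : ↑y ∈ D.bag t2),
    (D.tree.induce (Cset D i)).Reachable ⟨t1, ⟨x, x.2, h1⟩⟩ ⟨t2, ⟨y, y.2, h2⟩⟩ := by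
  intro x y p
  induction p with
  | @nil u =>
    intro t1 t2 h1 h2
    exact bag_reach D (↑u) (S := Cset D i)
      (fun t ht => (⟨_, u.2, ht⟩ : ∃ v ∈ XsSet n i, v ∈ D.bag t)) h1 h2
  | @cons a b c h p ih =>
    intro t1 t2 h1 h2
    have hadj : (subdividedComplete n).Adj ↑a ↑b := h
    obtain ⟨t, hat, hbt⟩ := D.bags_cover_edges hadj
    exact (bag_reach D (↑a) (S := Cset D i)
      (fun t' ht' => (⟨_, a.2, ht'⟩ : ∃ v ∈ XsSet n i, v ∈ D.bag t')) h1 hat).trans (ih hbt h2)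

lemma C_connected (i : Fin n) : (D.tree.induce (Cset D i)).Connected := by
  obtain ⟨t0, ht0⟩ := D.bags_cover_vertices (Sum.inl i)
  haveI : Nonempty ↑(Cset D i) := ⟨⟨t0, Sum.inl i, Or.inl rfl, ht0⟩⟩
  refine ⟨fun a b => ?_⟩
  obtain ⟨ta, ha⟩ := a
  obtain ⟨tb, hb⟩ := b
  obtain ⟨u, hu, hub⟩ := ha
  obtain ⟨w, hw, hwb⟩ := hb
  obtain ⟨p⟩ := (Xs_connected i).preconnected ⟨u, hu⟩ ⟨w, hw⟩
  exact walk_to_reach D p hub hwb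

lemma C_pairwise (i j : Fin n) : (Cset D i ∩ Cset D j).Nonempty := by
  by_cases hij : i = j
  · subst hij
    obtain ⟨t0, ht0⟩ := D.bags_cover_vertices (Sum.inl i)
    exact ⟨t0, ⟨Sum.inl i, Or.inl rfl, ht0⟩, ⟨Sum.inl i, Or.inl rfl, ht0⟩⟩
  · have hd : ¬ (s(i, j) : Sym2 (Fin n)).IsDiag := by
      rw [Sym2.mk_isDiag_iff]; exact hij
    set e : {e : Sym2 (Fin n) // ¬ e.IsDiag} := ⟨s(i, j), hd⟩ with he
    obtain ⟨t0, ht0⟩ := D.bags_cover_vertices (Sum.inr e)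
    refine ⟨t0, ⟨Sum.inr e, Or.inr ⟨e, rfl, ?_⟩, ht0⟩, ⟨Sum.inr e, Or.inr ⟨e, rfl, ?_⟩, ht0⟩⟩
    · simp [he]
    · simp [he]

end SubdividedComplete


section Counting

lemma le_indepNumOn {V' : Type} [Fintype V'] (G' : SimpleGraph V') {A : Set V'} {s : Finset V'}
    (hsub : ↑s ⊆ A) (hind : ∀ u ∈ s, ∀ v ∈ s, u ≠ v → ¬ G'.Adj u v) :
    s.card ≤ G'.indepNumOn A := by
  apply le_csSup
  · refine ⟨Fintype.card V', ?_⟩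
    rintro m ⟨s', -, -, rfl⟩
    exact Finset.card_le_univ s'
  · exact ⟨s, hsub, hind, rfl⟩

lemma counting {n : ℕ} (hn : 2 ≤ n) (B : Set (Fin n ⊕ {e : Sym2 (Fin n) // ¬ e.IsDiag}))
    (hit : ∀ i : Fin n, ∃ v ∈ XsSet n i, v ∈ B) :
    n / 2 ≤ (subdividedComplete n).indepNumOn B := by
  classical
  let A : Finset (Fin n) := Finset.univ.filter (fun i => Sum.inl i ∈ B)
  let Ac : Finset (Fin n) := Finset.univ.filter (fun i => ¬ Sum.inl i ∈ B)
  let S : Finset {e : Sym2 (Fin n) // ¬ e.IsDiag} :=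
    Finset.univ.filter (fun e => Sum.inr e ∈ B)
  let S₂ : Finset {e : Sym2 (Fin n) // ¬ e.IsDiag} :=
    S.filter (fun e => ∀ i, i ∈ e.1 → Sum.inl i ∉ B)
  -- a default subdivision vertex
  have hne : (⟨0, by omega⟩ : Fin n) ≠ ⟨1, by omega⟩ := by simp [Fin.ext_iff]
  let e0 : {e : Sym2 (Fin n) // ¬ e.IsDiag} :=
    ⟨s(⟨0, by omega⟩, ⟨1, by omega⟩), by rwa [Sym2.mk_isDiag_iff]⟩
  -- choice of cover
  have hch : ∀ i ∈ Ac, ∃ e : {e : Sym2 (Fin n) // ¬ e.IsDiag}, e ∈ S ∧ i ∈ e.1 := by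
    intro i hi
    have hiB : Sum.inl i ∉ B := (Finset.mem_filter.mp hi).2
    obtain ⟨v, hv, hvB⟩ := hit i
    rcases hv with h | ⟨e, rfl, he⟩
    · exact absurd (h ▸ hvB) hiB
    · exact ⟨e, Finset.mem_filter.mpr ⟨Finset.mem_univ _, hvB⟩, he⟩
  let f : Fin n → {e : Sym2 (Fin n) // ¬ e.IsDiag} := fun i =>
    if h : ∃ e : {e : Sym2 (Fin n) // ¬ e.IsDiag}, e ∈ S ∧ i ∈ e.1 then h.choose else e0
  have hf : ∀ i ∈ Ac, f i ∈ S ∧ i ∈ (f i).1 := by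
    intro i hi
    have h := hch i hi
    simp only [f]
    rw [dif_pos h]
    exact h.choose_spec
  have hsum : Ac.card = ∑ e ∈ S, (Ac.filter fun i => f i = e).card :=
    Finset.card_eq_sum_card_fiberwise (fun i hi => (hf i hi).1)
  -- the members of a subdivision vertex
  have hmem : ∀ e : {e : Sym2 (Fin n) // ¬ e.IsDiag}, ∃ x y : Fin n,
      e.1 = s(x, y) := fun e => by
    induction e.1 using Sym2.ind with
    | _ x y => exact ⟨x, y, rfl⟩
  have hfibsub : ∀ e, ∀ x y : Fin n, e.1 = s(x, y) →
      (Ac.filter fun i => f i = e) ⊆ {x, y} := by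
    intro e x y hxy i hi
    obtain ⟨hiAc, hfi⟩ := Finset.mem_filter.mp hi
    have := (hf i hiAc).2
    rw [hfi, hxy] at this
    rcases Sym2.mem_iff.mp this with rfl | rfl
    · exact Finset.mem_insert_self _ _
    · exact Finset.mem_insert_of_mem (Finset.mem_singleton_self _)
  have hfib2 : ∀ e ∈ S, (Ac.filter fun i => f i = e).card ≤ 2 := by
    intro e _
    obtain ⟨x, y, hxy⟩ := hmem e
    refine (Finset.card_le_card (hfibsub e x y hxy)).trans ?_
    exact (Finset.card_insert_le _ _).trans (by simp)
  have hfib1 : ∀ e ∈ S, e ∉ S₂ → (Ac.filter fun i => f i = e).card ≤ 1 := by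
    intro e heS heS2
    obtain ⟨x, y, hxy⟩ := hmem e
    have : ∃ i0, i0 ∈ e.1 ∧ Sum.inl i0 ∈ B := by
      by_contra h
      push_neg at h
      exact heS2 (Finset.mem_filter.mpr ⟨heS, fun i hi => h i hi⟩)
    obtain ⟨i0, hi0e, hi0B⟩ := this
    have hsub : (Ac.filter fun i => f i = e) ⊆ ({x, y} : Finset (Fin n)).erase i0 := by
      intro i hi
      refine Finset.mem_erase.mpr ⟨?_, hfibsub e x y hxy hi⟩
      rintro rfl
      exact (Finset.mem_filter.mp (Finset.mem_filter.mp hi).1).2 hi0B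
    have hi0mem : i0 ∈ ({x, y} : Finset (Fin n)) := by
      rw [hxy] at hi0e
      rcases Sym2.mem_iff.mp hi0e with rfl | rfl
      · exact Finset.mem_insert_self _ _
      · exact Finset.mem_insert_of_mem (Finset.mem_singleton_self _)
    refine (Finset.card_le_card hsub).trans ?_
    rw [Finset.card_erase_of_mem hi0mem]
    have : ({x, y} : Finset (Fin n)).card ≤ 2 := (Finset.card_insert_le _ _).trans (by simp)
    omega
  have hAn : A.card + Ac.card = n := by
    have := Finset.card_filter_add_card_filter_not
      (s := (Finset.univ : Finset (Fin n))) (p := fun i => Sum.inl i ∈ B)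
    simpa using this
  have hS2S : S.filter (· ∈ S₂) = S₂ := by
    ext e
    simp only [Finset.mem_filter, S₂]
    tauto
  have hScard : S₂.card + (S.filter (· ∉ S₂)).card = S.card := by
    have := Finset.card_filter_add_card_filter_not (s := S) (p := (· ∈ S₂))
    rw [hS2S] at this
    simpa using this
  have hAcle : Ac.card ≤ S₂.card * 2 + (S.filter (· ∉ S₂)).card := by
    have hsplit := Finset.sum_filter_add_sum_filter_not S (· ∈ S₂)
      (fun e => (Ac.filter fun i => f i = e).card)
    have hc2 : (S.filter (· ∈ S₂)).card = S₂.card := by rw [hS2S]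
    have h2 := Finset.sum_le_card_nsmul (S.filter (· ∈ S₂)) _ 2
      (fun e he => hfib2 e (Finset.mem_filter.mp he).1)
    have h1 := Finset.sum_le_card_nsmul (S.filter (· ∉ S₂)) _ 1
      (fun e he => hfib1 e (Finset.mem_filter.mp he).1 (Finset.mem_filter.mp he).2)
    simp only [smul_eq_mul] at h2 h1
    omega
  -- the two independent sets
  let s1 : Finset (Fin n ⊕ {e : Sym2 (Fin n) // ¬ e.IsDiag}) := S.image Sum.inr
  let s2 : Finset (Fin n ⊕ {e : Sym2 (Fin n) // ¬ e.IsDiag}) :=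
    S₂.image Sum.inr ∪ A.image Sum.inl
  have hs1card : s1.card = S.card := Finset.card_image_of_injective _ Sum.inr_injective
  have hs1 : s1.card ≤ (subdividedComplete n).indepNumOn B := by
    refine le_indepNumOn _ ?_ ?_
    · intro v hv
      obtain ⟨e, he, rfl⟩ := Finset.mem_image.mp hv
      exact (Finset.mem_filter.mp he).2
    · intro u hu v hv _
      obtain ⟨e, _, rfl⟩ := Finset.mem_image.mp hu
      obtain ⟨e', _, rfl⟩ := Finset.mem_image.mp hv
      exact sc_not_adj_inr
  have hs2card : s2.card = S₂.card + A.card := by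
    rw [Finset.card_union_of_disjoint, Finset.card_image_of_injective _ Sum.inr_injective,
      Finset.card_image_of_injective _ Sum.inl_injective]
    simp [Finset.disjoint_left]
  have hs2 : s2.card ≤ (subdividedComplete n).indepNumOn B := by
    refine le_indepNumOn _ ?_ ?_
    · intro v hv
      rcases Finset.mem_union.mp hv with h | h
      · obtain ⟨e, he, rfl⟩ := Finset.mem_image.mp h
        exact (Finset.mem_filter.mp ((Finset.mem_filter.mp he).1)).2
      · obtain ⟨i, hi, rfl⟩ := Finset.mem_image.mp h
        exact (Finset.mem_filter.mp hi).2
    · have key : ∀ i e, i ∈ A → e ∈ S₂ →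
          ¬ (subdividedComplete n).Adj (Sum.inl i) (Sum.inr e) := by
        intro i e hi he hadj
        have hie := sc_adj_inl_inr.mp hadj
        exact (Finset.mem_filter.mp he).2 i hie (Finset.mem_filter.mp hi).2
      intro u hu v hv _
      rcases Finset.mem_union.mp hu with h | h <;> rcases Finset.mem_union.mp hv with h' | h'
      · obtain ⟨e, _, rfl⟩ := Finset.mem_image.mp h
        obtain ⟨e', _, rfl⟩ := Finset.mem_image.mp h'
        exact sc_not_adj_inr
      · obtain ⟨e, he, rfl⟩ := Finset.mem_image.mp h
        obtain ⟨i, hi, rfl⟩ := Finset.mem_image.mp h'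
        intro hadj
        exact key i e hi he hadj.symm
      · obtain ⟨i, hi, rfl⟩ := Finset.mem_image.mp h
        obtain ⟨e, he, rfl⟩ := Finset.mem_image.mp h'
        exact key i e hi he
      · obtain ⟨i, _, rfl⟩ := Finset.mem_image.mp h
        obtain ⟨i', _, rfl⟩ := Finset.mem_image.mp h'
        exact sc_not_adj_inl
  have hn2 : n ≤ 2 * (subdividedComplete n).indepNumOn B := by
    rw [hs1card] at hs1
    rw [hs2card] at hs2
    omega
  omega

end Counting

/-- For every `n ≥ 4`, the graph obtained from `K_n` by subdividing
every edge once has tree-independence number at least `⌊n/2⌋`. -/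
theorem floor_half_le_treeIndepNum_subdividedComplete (n : ℕ) (hn : 4 ≤ n) :
    ((n / 2 : ℕ) : ℕ∞) ≤ (subdividedComplete n).treeIndepNum := by
  rw [SimpleGraph.treeIndepNum]
  refine le_iInf fun D => ?_
  obtain ⟨m, rfl⟩ : ∃ m, n = m + 1 := ⟨n - 1, by omega⟩
  obtain ⟨t, ht⟩ := helly D.isTree m (fun i => Cset D i) (fun i => C_connected D i)
    (fun i j => C_pairwise D i j)
  rw [Set.mem_iInter] at ht
  have hcount := counting (n := m + 1) (by omega) (D.bag t) (fun i => ht i)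
  refine le_trans (Nat.cast_le.mpr hcount) ?_
  rw [SimpleGraph.TreeDecomp.indepNum]
  exact le_iSup (fun t' => (((subdividedComplete (m + 1)).indepNumOn (D.bag t') : ℕ∞))) t
end
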